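/- arXiv:2002.02022 — 3 statements merged into one kernel-verified Lean document; each statement's English description precedes it below -/
import Mathlib

section
/- Suppose c satisfies (Reg) and (Twist) and μ is absolutely continuous. Let ψ₁, ψ₂ ∈ ℝᴺ be optimal dual vectors for ν_{λ₁} and ν_{λ₂} respectively, i.e. G(ψ₁) = λ₁ and G(ψ₂) = λ₂. Then Σ_{i=1}^N μ(Lag_i(ψ₁) Δ Lag_i(ψ₂)) ≤ 4N‖λ₁ − λ₂‖₁, where ‖·‖₁ is the ℓ¹ norm on ℝᴺ. -/
open MeasureTheory Metric Set Filter Bornology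
open scoped RealInnerProductSpace ENNReal NNReal Topology symmDiff

noncomputable section

/-- Euclidean `n`-space. -/
abbrev Euc (n : ℕ) : Type := EuclideanSpace ℝ (Fin n)

/-- The `c^*`-transform `ψ^{c^*}(x) = max_i (-c(x,y_i) - ψ^i)` of a dual vector `ψ`. -/
def cStar {n N : ℕ} (c : Euc n → Fin N → ℝ) (ψ : Fin N → ℝ) (x : Euc n) : ℝ :=
  ⨆ i, (-(c x i) - ψ i)

/-- The `i`-th Laguerre cell associated to the dual vector `ψ`. -/
def Lag {n N : ℕ} (X : Set (Euc n)) (c : Euc n → Fin N → ℝ) (ψ : Fin N → ℝ) (i : Fin N) :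
    Set (Euc n) :=
  {x ∈ X | -(c x i) - ψ i = cStar c ψ x}

/-- The map `G(ψ)^i = μ(Lag_i(ψ))`. -/
def Gmap {n N : ℕ} (μ : Measure (Euc n)) (X : Set (Euc n)) (c : Euc n → Fin N → ℝ)
    (ψ : Fin N → ℝ) (i : Fin N) : ℝ :=
  (μ (Lag X c ψ i)).toReal

/-- Condition (Reg): each `c(·, y_i)` is `C²`. -/
def Reg {n N : ℕ} (c : Euc n → Fin N → ℝ) : Prop :=
  ∀ i, ContDiff ℝ 2 fun x => c x i

/-- Condition (Twist): the gradients `∇_x c(x, y_i)` are pairwise distinct on `X`. -/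
def Twist {n N : ℕ} (X : Set (Euc n)) (c : Euc n → Fin N → ℝ) : Prop :=
  ∀ x ∈ X, ∀ i j : Fin N, i ≠ j →
    gradient (fun z => c z i) x ≠ gradient (fun z => c z j) x

/-- `X` has Lipschitz boundary: near every boundary point, `X` coincides with the epigraph
of a Lipschitz function over some hyperplane. -/
def HasLipschitzBoundary {n : ℕ} (X : Set (Euc n)) : Prop :=
  ∀ x ∈ frontier X, ∃ (v : Euc n) (g : Euc n → ℝ) (K : NNReal) (r : ℝ),
    0 < r ∧ ‖v‖ = 1 ∧ LipschitzWith K g ∧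
    ∀ z ∈ ball x r, (z ∈ X ↔ g (z - ⟪z, v⟫ • v) ≤ ⟪z, v⟫)

/-- The `(q,1)`-Poincaré–Wirtinger inequality with constant `CPW`. -/
def PWIneq {n : ℕ} (μ : Measure (Euc n)) (q CPW : ℝ) : Prop :=
  ∀ f : Euc n → ℝ, ContDiff ℝ 1 f →
    (∫ x, |f x - ∫ z, f z ∂μ| ^ q ∂μ) ^ (1 / q) ≤ CPW * ∫ x, ‖gradient f x‖ ∂μ

/-- Loeper's condition (QC): for each `i`, a convex set `X_i` together with a `C²`
diffeomorphism `exp_i^c : X_i → X` such that all sublevel sets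
`{p ∈ X_i : -c(exp_i^c p, y_k) + c(exp_i^c p, y_i) ≤ t}` are convex. -/
structure LoeperSystem {n N : ℕ} (X : Set (Euc n)) (c : Euc n → Fin N → ℝ) where
  dom : Fin N → Set (Euc n)
  exp : Fin N → Euc n → Euc n
  expInv : Fin N → Euc n → Euc n
  convex_dom : ∀ i, Convex ℝ (dom i)
  contDiffOn_exp : ∀ i, ContDiffOn ℝ 2 (exp i) (dom i)
  contDiffOn_expInv : ∀ i, ContDiffOn ℝ 2 (expInv i) X
  mapsTo_exp : ∀ i, MapsTo (exp i) (dom i) X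
  mapsTo_expInv : ∀ i, MapsTo (expInv i) X (dom i)
  left_inv : ∀ i, ∀ p ∈ dom i, expInv i (exp i p) = p
  right_inv : ∀ i, ∀ z ∈ X, exp i (expInv i z) = z
  sublevel_convex : ∀ i k : Fin N, ∀ t : ℝ,
    Convex ℝ {p ∈ dom i | -(c (exp i p) k) + c (exp i p) i ≤ t}

/-- `(T, λ)` minimizes the semi-discrete optimal transport problem with storage fee
given by the convex indicator function of the set `S`. -/
def IsOptimalPair {n N : ℕ} (μ : Measure (Euc n)) (c : Euc n → Fin N → ℝ)
    (T : Euc n → Fin N) (lam : Fin N → ℝ) (S : Set (Fin N → ℝ)) : Prop :=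
  Measurable T ∧ (∀ i, μ (T ⁻¹' {i}) = ENNReal.ofReal (lam i)) ∧ lam ∈ S ∧
    ∀ (T' : Euc n → Fin N) (lam' : Fin N → ℝ), Measurable T' →
      (∀ i, μ (T' ⁻¹' {i}) = ENNReal.ofReal (lam' i)) → lam' ∈ S →
      ∫ x, c x (T x) ∂μ ≤ ∫ x, c x (T' x) ∂μ

/-- The support of a measure. -/
def msupport {n : ℕ} (μ : Measure (Euc n)) : Set (Euc n) :=
  {x | ∀ U ∈ nhds x, 0 < μ U}

/-- The pseudo `c`-transform `φ^{c†}` of a function `φ`. -/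
def cDagger {n N : ℕ} (μ : Measure (Euc n)) (c : Euc n → Fin N → ℝ) (φ : Euc n → ℝ) :
    Fin N → ℝ :=
  fun i => sSup ((fun x => -(c x i) - φ x) '' msupport μ)

set_option maxHeartbeats 1000000

lemma volume_level_aux {n : ℕ} {f : Euc n → ℝ} (hf : ContDiff ℝ 1 f) (a : ℝ) :
    volume {x : Euc n | f x = a ∧ fderiv ℝ f x ≠ 0} = 0 := by
  set s := {x : Euc n | f x = a ∧ fderiv ℝ f x ≠ 0} with hs
  refine measure_null_of_locally_null s fun x₀ hx₀ => ?_
  obtain ⟨hfx₀, hD⟩ := hx₀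
  set D := fderiv ℝ f x₀ with hDdef
  set G := gradient f x₀ with hGdef
  have hG : G ≠ 0 := by
    intro h
    apply hD
    have : (InnerProductSpace.toDual ℝ (Euc n)).symm D = 0 := h
    have := congrArg (InnerProductSpace.toDual ℝ (Euc n)) this
    simpa using this
  set v : Euc n := ‖G‖⁻¹ • G with hvdef
  have hGnorm : (0:ℝ) < ‖G‖ := norm_pos_iff.2 hG
  have hDG : ∀ h : Euc n, D h = ⟪G, h⟫ := fun h =>
    (InnerProductSpace.toDual_symm_apply (y := D) (x := h)).symm
  have hvv : ⟪v, v⟫ = 1 := by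
    rw [hvdef, real_inner_smul_left, real_inner_smul_right, real_inner_self_eq_norm_sq]
    field_simp
  have hGne : ‖G‖ ≠ 0 := ne_of_gt hGnorm
  have hDv : D v = ‖G‖ := by
    rw [hDG, hvdef, real_inner_smul_right, real_inner_self_eq_norm_sq]
    field_simp
  -- the map Φ and its derivative
  set Φ : Euc n → Euc n := fun z => z + (f z - ⟪v, z⟫) • v with hΦdef
  set Φ' : Euc n →L[ℝ] Euc n :=
    ContinuousLinearMap.id ℝ (Euc n) + (D - innerSL ℝ v).smulRight v with hΦ'def
  have hΦ'apply : ∀ h : Euc n, Φ' h = h + (D h - ⟪v, h⟫) • v := by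
    intro h; simp [hΦ'def]
  have hfD : HasStrictFDerivAt f D x₀ := hf.hasStrictFDerivAt one_ne_zero
  have hΦΦ' : HasStrictFDerivAt Φ Φ' x₀ := by
    exact hasStrictFDerivAt_id x₀ |>.add
      (((hfD.sub ((innerSL ℝ v).hasStrictFDerivAt)).smul_const v))
  -- injectivity of Φ'
  have hker : ∀ h : Euc n, Φ' h = 0 → h = 0 := by
    intro h hh
    rw [hΦ'apply] at hh
    set t := D h - ⟪v, h⟫ with htdef
    have h1 : ⟪v, h⟫ + t * ⟪v, v⟫ = 0 := by
      have e := congrArg (fun z => ⟪v, z⟫) hh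
      simp only [inner_add_right, real_inner_smul_right, inner_zero_right] at e
      exact e
    have h2 : D h + t * D v = 0 := by
      have e := congrArg (fun z => D z) hh
      simp only [map_add, ContinuousLinearMap.map_smul, smul_eq_mul, map_zero] at e
      exact e
    rw [hvv, mul_one] at h1
    have ht : t * ‖G‖ = 0 := by
      have := sub_eq_zero.mpr (h2.trans h1.symm)
      rw [hDv] at this
      nlinarith [this]
    have ht0 : t = 0 := by
      rcases mul_eq_zero.1 ht with h' | h'
      · exact h'
      · exact absurd h' (ne_of_gt hGnorm)
    have : h + t • v = 0 := hh
    rw [ht0, zero_smul, add_zero] at this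
    exact this
  have hinj : Function.Injective Φ' := by
    intro h1 h2 he
    have : Φ' (h1 - h2) = 0 := by rw [map_sub, he, sub_self]
    exact sub_eq_zero.1 (hker _ this)
  have hsurj : Function.Surjective Φ'.toLinearMap :=
    (LinearMap.injective_iff_surjective).1 hinj
  set CLE : Euc n ≃L[ℝ] Euc n :=
    (LinearEquiv.ofBijective Φ'.toLinearMap ⟨hinj, hsurj⟩).toContinuousLinearEquiv with hCLE
  have hCLEc : (CLE : Euc n →L[ℝ] Euc n) = Φ' := by
    apply ContinuousLinearMap.ext; intro h; rfl
  have hΦe : HasStrictFDerivAt Φ (CLE : Euc n →L[ℝ] Euc n) x₀ := by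
    rw [hCLEc]; exact hΦΦ'
  set F := hΦe.toOpenPartialHomeomorph Φ with hF
  have hFsrc : x₀ ∈ F.source := hΦe.mem_toOpenPartialHomeomorph_source
  -- Φ is C¹
  have hΦc : ContDiff ℝ 1 Φ :=
    contDiff_id.add ((hf.sub (innerSL ℝ v).contDiff).smul contDiff_const)
  have hfderiv : ∀ z, fderiv ℝ Φ z = fderiv ℝ Φ z := fun _ => rfl
  have hdet0 : (fderiv ℝ Φ x₀).det ≠ 0 := by
    have : fderiv ℝ Φ x₀ = Φ' := hΦΦ'.hasFDerivAt.fderiv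
    rw [this, ← hCLEc]
    simp only [ContinuousLinearMap.det]
    exact ((LinearEquiv.ofBijective Φ'.toLinearMap ⟨hinj, hsurj⟩).isUnit_det').ne_zero
  have hcont : Continuous fun z => |(fderiv ℝ Φ z).det| :=
    (ContinuousLinearMap.continuous_det.comp (hΦc.continuous_fderiv one_ne_zero)).abs
  set δ := |(fderiv ℝ Φ x₀).det| / 2 with hδdef
  have hδpos : 0 < δ := by
    have := abs_pos.2 hdet0
    rw [hδdef]; linarith
  -- a good ball around x₀
  obtain ⟨r, hr0, hrball⟩ : ∃ r > 0,
      ball x₀ r ⊆ F.source ∩ (fun z => |(fderiv ℝ Φ z).det|) ⁻¹' (Ioi δ) := by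
    have hWopen : IsOpen (F.source ∩ (fun z => |(fderiv ℝ Φ z).det|) ⁻¹' (Ioi δ)) :=
      F.open_source.inter (isOpen_Ioi.preimage hcont)
    have hWmem : x₀ ∈ F.source ∩ (fun z => |(fderiv ℝ Φ z).det|) ⁻¹' (Ioi δ) := by
      refine ⟨hFsrc, ?_⟩
      simp only [mem_preimage, mem_Ioi, hδdef]
      linarith [abs_pos.2 hdet0]
    exact Metric.isOpen_iff.1 hWopen x₀ hWmem
  set sl := {z ∈ ball x₀ r | f z = a} with hsl
  have hslm : MeasurableSet sl := by
    have : sl = ball x₀ r ∩ f ⁻¹' {a} := by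
      ext z; simp [hsl, and_comm]
    rw [this]
    exact measurableSet_ball.inter ((isClosed_singleton.preimage (hf.continuous)).measurableSet)
  -- the hyperplane and its measure
  have hH : volume {y : Euc n | ⟪v, y⟫ = a} = 0 := by
    set S : AffineSubspace ℝ (Euc n) :=
      AffineSubspace.mk' (a • v) (LinearMap.ker ((innerSL ℝ v).toLinearMap)) with hS
    have hSeq : {y : Euc n | ⟪v, y⟫ = a} = (S : Set (Euc n)) := by
      ext y
      simp only [hS, mem_setOf_eq, SetLike.mem_coe, AffineSubspace.mem_mk',
        LinearMap.mem_ker, ContinuousLinearMap.coe_coe, vsub_eq_sub]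
      rw [innerSL_apply_apply, inner_sub_right, real_inner_smul_right, hvv, mul_one, sub_eq_zero]
    have hSne : S ≠ ⊤ := by
      intro htop
      have : (LinearMap.ker ((innerSL ℝ v).toLinearMap)) = ⊤ := by
        have := congrArg AffineSubspace.direction htop
        rwa [AffineSubspace.direction_mk', AffineSubspace.direction_top] at this
      have hv0 : ⟪v, v⟫ = (0:ℝ) := by
        have hmem : v ∈ LinearMap.ker ((innerSL ℝ v).toLinearMap) := by rw [this]; trivial
        simpa using hmem
      rw [hvv] at hv0
      norm_num at hv0
    rw [hSeq]
    exact Measure.addHaar_affineSubspace volume S hSne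
  -- image of sl lands in the hyperplane
  have himg : Φ '' sl ⊆ {y : Euc n | ⟪v, y⟫ = a} := by
    rintro _ ⟨z, hz, rfl⟩
    have hfz : f z = a := hz.2
    simp only [mem_setOf_eq, hΦdef, inner_add_right, real_inner_smul_right, hvv, mul_one, hfz]
    ring
  have himg0 : volume (Φ '' sl) = 0 := measure_mono_null himg hH
  -- Jacobian change of variables
  have hderivsl : ∀ z ∈ sl, HasFDerivWithinAt Φ (fderiv ℝ Φ z) sl z := fun z _ =>
    ((hΦc.differentiable one_ne_zero) z).hasFDerivAt.hasFDerivWithinAt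
  have hinjOn : InjOn Φ sl := by
    have h1 : InjOn F F.source := F.injOn
    have h2 : sl ⊆ F.source := fun z hz => (hrball hz.1).1
    have : InjOn Φ F.source := by
      have hFc : (F : Euc n → Euc n) = Φ := hΦe.toOpenPartialHomeomorph_coe
      rwa [hFc] at h1
    exact this.mono h2
  have hjac :
      (∫⁻ z in sl, ENNReal.ofReal |(fderiv ℝ Φ z).det| ∂volume) = volume (Φ '' sl) :=
    lintegral_abs_det_fderiv_eq_addHaar_image volume hslm hderivsl hinjOn
  have hlow : ENNReal.ofReal δ * volume sl ≤
      ∫⁻ z in sl, ENNReal.ofReal |(fderiv ℝ Φ z).det| ∂volume := by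
    rw [← setLIntegral_const sl (ENNReal.ofReal δ)]
    refine setLIntegral_mono (ENNReal.measurable_ofReal.comp hcont.measurable) ?_
    intro z hz
    exact ENNReal.ofReal_le_ofReal (le_of_lt (hrball hz.1).2)
  have hsl0 : volume sl = 0 := by
    have : ENNReal.ofReal δ * volume sl = 0 := le_antisymm (by rw [← himg0, ← hjac]; exact hlow |>.trans (le_of_eq rfl)) (zero_le)
    rcases mul_eq_zero.1 this with h' | h'
    · exact absurd h' (by simp [ENNReal.ofReal_eq_zero, not_le, hδpos])
    · exact h'
  refine ⟨s ∩ ball x₀ r, inter_mem_nhdsWithin s (ball_mem_nhds x₀ hr0), ?_⟩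
  refine measure_mono_null ?_ hsl0
  rintro z ⟨⟨hza, _⟩, hzb⟩
  exact ⟨hzb, hza⟩

lemma tie_null {n N : ℕ} {X : Set (Euc n)} {c : Euc n → Fin N → ℝ} (hreg : Reg c)
    (htwist : Twist X c) {μ : Measure (Euc n)} (hac : μ ≪ volume)
    {i k : Fin N} (hik : i ≠ k) (a : ℝ) :
    μ {x ∈ X | c x k - c x i = a} = 0 := by
  set g : Euc n → ℝ := fun x => c x k - c x i with hg
  have hgc : ContDiff ℝ 1 g := ((hreg k).of_le one_le_two).sub ((hreg i).of_le one_le_two)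
  apply hac
  refine measure_mono_null ?_ (volume_level_aux hgc a)
  rintro x ⟨hxX, hxa⟩
  refine ⟨hxa, ?_⟩
  intro h0
  have hdk : DifferentiableAt ℝ (fun z => c z k) x :=
    (((hreg k).of_le one_le_two).differentiable one_ne_zero).differentiableAt
  have hdi : DifferentiableAt ℝ (fun z => c z i) x :=
    (((hreg i).of_le one_le_two).differentiable one_ne_zero).differentiableAt
  have hsub : fderiv ℝ g x
      = fderiv ℝ (fun z => c z k) x - fderiv ℝ (fun z => c z i) x := fderiv_sub hdk hdi
  have heq : fderiv ℝ (fun z => c z i) x = fderiv ℝ (fun z => c z k) x := by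
    rw [hsub] at h0
    exact (sub_eq_zero.1 h0).symm
  exact htwist x hxX i k hik (by rw [gradient, gradient, heq])

lemma aux_diff_bound {n N : ℕ} (μ : Measure (Euc n)) [IsFiniteMeasure μ]
    (A B : Fin N → Set (Euc n)) (Z : Set (Euc n)) (d : Fin N → ℝ) (a b : Fin N → ℝ)
    (hZ : μ Z = 0) (hZm : MeasurableSet Z)
    (hAm : ∀ i, MeasurableSet (A i)) (hBm : ∀ i, MeasurableSet (B i))
    (hcov : ∀ k, ∀ x ∈ B k, ∃ j, x ∈ A j)
    (hAB : ∀ x i k, x ∈ A i → x ∈ B k → d i ≤ d k)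
    (hABZ : ∀ x i k, i ≠ k → x ∈ A i → x ∈ B k → d i = d k → x ∈ Z)
    (hBdisj : ∀ (x : Euc n) (k k' : Fin N), k ≠ k' → x ∈ B k → x ∈ B k' → x ∈ Z)
    (ha : ∀ i, (μ (A i)).toReal = a i) (hb : ∀ i, (μ (B i)).toReal = b i)
    (i : Fin N) :
    (μ (A i \ B i)).toReal ≤ ∑ k, |a k - b k| := by
  classical
  set S : Finset (Fin N) := Finset.univ.filter (fun k => d k ≤ d i) with hS
  set U := ⋃ k ∈ S, A k with hU
  set V := ⋃ k ∈ S, B k with hV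
  set V' := ⋃ k ∈ S, (B k \ Z) with hV'
  have hiS : i ∈ S := by simp [hS]
  have step1 : A i \ B i ⊆ (U \ V) ∪ Z := by
    rintro x ⟨hxA, hxB⟩
    by_cases hz : x ∈ Z
    · exact Or.inr hz
    refine Or.inl ⟨Set.mem_biUnion hiS hxA, ?_⟩
    intro hxV
    obtain ⟨k, hkS, hxBk⟩ := Set.mem_iUnion₂.1 hxV
    have hki : d k ≤ d i := by simpa [hS] using hkS
    have hik : d i ≤ d k := hAB x i k hxA hxBk
    by_cases hkeq : i = k
    · exact hxB (hkeq ▸ hxBk)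
    · exact hz (hABZ x i k hkeq hxA hxBk (le_antisymm hik hki))
  have step2 : V' ⊆ U := by
    rintro x hx
    obtain ⟨k, hkS, hxk, -⟩ := Set.mem_iUnion₂.1 hx
    obtain ⟨j, hj⟩ := hcov k x hxk
    have hjk : d j ≤ d k := hAB x j k hj hxk
    have hki : d k ≤ d i := by simpa [hS] using hkS
    exact Set.mem_biUnion (by rw [hS]; exact Finset.mem_filter.2 ⟨Finset.mem_univ _, le_trans hjk hki⟩) hj
  have hV'm : MeasurableSet V' := S.measurableSet_biUnion fun k _ => (hBm k).diff hZm
  have hdisjUV : Disjoint (U \ V) V' := by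
    refine Set.disjoint_left.2 ?_
    rintro x ⟨-, hxV⟩ hxV'
    obtain ⟨k, hkS, hxk, -⟩ := Set.mem_iUnion₂.1 hxV'
    exact hxV (Set.mem_biUnion hkS hxk)
  -- ENNReal inequality
  have h1 : μ (A i \ B i) ≤ μ (U \ V) := by
    refine (measure_mono step1).trans ?_
    refine (measure_union_le _ _).trans ?_
    rw [hZ, add_zero]
  have h2 : μ (U \ V) + μ V' ≤ μ U := by
    rw [← measure_union hdisjUV hV'm]
    exact measure_mono (Set.union_subset Set.diff_subset step2)
  have hkey : μ (A i \ B i) + μ V' ≤ μ U :=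
    le_trans (add_le_add_left h1 _) h2
  have hreal : (μ (A i \ B i)).toReal + (μ V').toReal ≤ (μ U).toReal := by
    rw [← ENNReal.toReal_add (measure_ne_top μ _) (measure_ne_top μ _)]
    exact ENNReal.toReal_mono (measure_ne_top μ U) hkey
  -- compute/estimate the two measures
  have hdisjB : (↑S : Set (Fin N)).PairwiseDisjoint (fun k => B k \ Z) := by
    intro k _ k' _ hkk'
    refine Set.disjoint_left.2 ?_
    rintro x ⟨hxk, hxZ⟩ ⟨hxk', -⟩
    exact hxZ (hBdisj x k k' hkk' hxk hxk')
  have hV'val : (μ V').toReal = ∑ k ∈ S, b k := by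
    rw [hV', measure_biUnion_finset hdisjB fun k _ => (hBm k).diff hZm,
      ENNReal.toReal_sum fun k _ => measure_ne_top μ _]
    refine Finset.sum_congr rfl fun k _ => ?_
    rw [measure_diff_null hZ]
    exact hb k
  have hUval : (μ U).toReal ≤ ∑ k ∈ S, a k := by
    calc (μ U).toReal ≤ (∑ k ∈ S, μ (A k)).toReal := by
          refine ENNReal.toReal_mono ?_ (measure_biUnion_finset_le S A)
          exact (ENNReal.sum_lt_top.2 fun k _ => measure_lt_top μ _).ne
      _ = ∑ k ∈ S, (μ (A k)).toReal := ENNReal.toReal_sum fun k _ => measure_ne_top μ _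
      _ = ∑ k ∈ S, a k := Finset.sum_congr rfl fun k _ => ha k
  have : (μ (A i \ B i)).toReal ≤ ∑ k ∈ S, (a k - b k) := by
    rw [Finset.sum_sub_distrib]
    linarith [hreal, hV'val, hUval]
  refine this.trans ?_
  calc ∑ k ∈ S, (a k - b k) ≤ ∑ k ∈ S, |a k - b k| :=
        Finset.sum_le_sum fun k _ => le_abs_self _
    _ ≤ ∑ k, |a k - b k| :=
        Finset.sum_le_sum_of_subset_of_nonneg (Finset.subset_univ S)
          (fun k _ _ => abs_nonneg _)


lemma le_cStar' {n N : ℕ} (c : Euc n → Fin N → ℝ) (ψ : Fin N → ℝ) (x : Euc n) (k : Fin N) :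
    -(c x k) - ψ k ≤ cStar c ψ x :=
  le_ciSup (f := fun i => -(c x i) - ψ i) (Set.Finite.bddAbove (Set.finite_range _)) k

lemma exists_mem_Lag {n N : ℕ} (hN : 0 < N) (X : Set (Euc n)) (c : Euc n → Fin N → ℝ)
    (ψ : Fin N → ℝ) {x : Euc n} (hx : x ∈ X) : ∃ i, x ∈ Lag X c ψ i := by
  have : Nonempty (Fin N) := ⟨⟨0, hN⟩⟩
  obtain ⟨i, hi⟩ := Finite.exists_max fun i => -(c x i) - ψ i
  exact ⟨i, hx, le_antisymm (le_cStar' c ψ x i) (ciSup_le hi)⟩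

lemma cStar_continuous {n N : ℕ} (hN : 0 < N) (c : Euc n → Fin N → ℝ)
    (hc : ∀ i, Continuous fun x => c x i) (ψ : Fin N → ℝ) : Continuous (cStar c ψ) := by
  have : Nonempty (Fin N) := ⟨⟨0, hN⟩⟩
  have h : cStar c ψ
      = fun x => Finset.univ.sup' Finset.univ_nonempty fun i => -(c x i) - ψ i := by
    funext x
    exact (Finset.sup'_univ_eq_ciSup _).symm
  rw [h]
  exact Continuous.finset_sup'_apply Finset.univ_nonempty
    fun i _ => ((hc i).neg).sub continuous_const

lemma sep_eq_meas {n : ℕ} {X : Set (Euc n)} (hX : MeasurableSet X) {g h : Euc n → ℝ}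
    (hg : Continuous g) (hh : Continuous h) : MeasurableSet {x ∈ X | g x = h x} :=
  hX.inter ((isClosed_eq hg hh).measurableSet)


set_option maxHeartbeats 1000000 in
/-- **Theorem 1.2 (μ-symmetric stability of Laguerre cells).** -/
theorem stmt0 {n N : ℕ} (hn : 2 ≤ n) (hN : 0 < N)
    (X : Set (Euc n)) (hXcpt : IsCompact X)
    (c : Euc n → Fin N → ℝ) (hreg : Reg c) (htwist : Twist X c)
    (μ : Measure (Euc n)) [IsProbabilityMeasure μ]
    (hac : μ ≪ volume) (hsupp : μ Xᶜ = 0)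
    (lam₁ lam₂ : Fin N → ℝ)
    (hlam₁ : (∑ i, lam₁ i) = 1 ∧ ∀ i, 0 ≤ lam₁ i)
    (hlam₂ : (∑ i, lam₂ i) = 1 ∧ ∀ i, 0 ≤ lam₂ i)
    (ψ₁ ψ₂ : Fin N → ℝ)
    (hG₁ : ∀ i, Gmap μ X c ψ₁ i = lam₁ i)
    (hG₂ : ∀ i, Gmap μ X c ψ₂ i = lam₂ i) :
    ∑ i, (μ (symmDiff (Lag X c ψ₁ i) (Lag X c ψ₂ i))).toReal
      ≤ 4 * N * ∑ i, |lam₁ i - lam₂ i| := by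
  classical
  have hNne : Nonempty (Fin N) := ⟨⟨0, hN⟩⟩
  have hconts : ∀ i : Fin N, Continuous fun x => c x i := fun i => (hreg i).continuous
  set A : Fin N → Set (Euc n) := fun i => Lag X c ψ₁ i with hA
  set B : Fin N → Set (Euc n) := fun i => Lag X c ψ₂ i with hB
  have hXm : MeasurableSet X := hXcpt.isClosed.measurableSet
  have hAm : ∀ i, MeasurableSet (A i) := fun i =>
    sep_eq_meas hXm (((hconts i).neg).sub continuous_const) (cStar_continuous hN c hconts ψ₁)
  have hBm : ∀ i, MeasurableSet (B i) := fun i =>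
    sep_eq_meas hXm (((hconts i).neg).sub continuous_const) (cStar_continuous hN c hconts ψ₂)
  -- the exceptional null set
  set Z : Set (Euc n) := ⋃ (p : Fin N × Fin N) (_ : p.1 ≠ p.2),
      ({x ∈ X | c x p.2 - c x p.1 = ψ₁ p.1 - ψ₁ p.2} ∪
       {x ∈ X | c x p.2 - c x p.1 = ψ₂ p.1 - ψ₂ p.2}) with hZdef
  have hZ0 : μ Z = 0 := by
    refine measure_iUnion_null fun p => measure_iUnion_null fun hp => ?_
    exact measure_union_null (tie_null hreg htwist hac hp _) (tie_null hreg htwist hac hp _)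
  have hZm : MeasurableSet Z := by
    refine MeasurableSet.iUnion fun p => MeasurableSet.iUnion fun hp => MeasurableSet.union ?_ ?_ <;>
      exact sep_eq_meas hXm ((hconts _).sub (hconts _)) continuous_const
  have hZmem1 : ∀ {x : Euc n} {i k : Fin N}, i ≠ k → x ∈ X →
      c x k - c x i = ψ₁ i - ψ₁ k → x ∈ Z := by
    intro x i k hik hxX h
    exact Set.mem_iUnion.2 ⟨(i, k), Set.mem_iUnion.2 ⟨hik, Or.inl ⟨hxX, h⟩⟩⟩
  have hZmem2 : ∀ {x : Euc n} {i k : Fin N}, i ≠ k → x ∈ X →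
      c x k - c x i = ψ₂ i - ψ₂ k → x ∈ Z := by
    intro x i k hik hxX h
    exact Set.mem_iUnion.2 ⟨(i, k), Set.mem_iUnion.2 ⟨hik, Or.inr ⟨hxX, h⟩⟩⟩
  -- basic facts about Laguerre cells
  have hmemA : ∀ {x : Euc n} {i : Fin N}, x ∈ A i →
      ∀ k, -(c x k) - ψ₁ k ≤ -(c x i) - ψ₁ i := by
    intro x i hx k
    rw [hx.2]
    exact le_cStar' c ψ₁ x k
  have hmemB : ∀ {x : Euc n} {i : Fin N}, x ∈ B i →
      ∀ k, -(c x k) - ψ₂ k ≤ -(c x i) - ψ₂ i := by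
    intro x i hx k
    rw [hx.2]
    exact le_cStar' c ψ₂ x k
  have hd : ∀ (x : Euc n) (i k : Fin N), x ∈ A i → x ∈ B k →
      ψ₁ i - ψ₂ i ≤ ψ₁ k - ψ₂ k := by
    intro x i k hxA hxB
    have h1 := hmemA hxA k
    have h2 := hmemB hxB i
    linarith
  have hdZ : ∀ (x : Euc n) (i k : Fin N), i ≠ k → x ∈ A i → x ∈ B k →
      ψ₁ i - ψ₂ i = ψ₁ k - ψ₂ k → x ∈ Z := by
    intro x i k hik hxA hxB he
    have h1 := hmemA hxA k
    have h2 := hmemB hxB i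
    exact hZmem1 hik hxA.1 (by linarith)
  have hAdisj : ∀ (x : Euc n) (i k : Fin N), i ≠ k → x ∈ A i → x ∈ A k → x ∈ Z := by
    intro x i k hik hxi hxk
    have h1 := hmemA hxi k
    have h2 := hmemA hxk i
    exact hZmem1 hik hxi.1 (by linarith)
  have hBdisj : ∀ (x : Euc n) (i k : Fin N), i ≠ k → x ∈ B i → x ∈ B k → x ∈ Z := by
    intro x i k hik hxi hxk
    have h1 := hmemB hxi k
    have h2 := hmemB hxk i
    exact hZmem2 hik hxi.1 (by linarith)
  have hcovA : ∀ k : Fin N, ∀ x ∈ B k, ∃ j, x ∈ A j := fun k x hx =>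
    exists_mem_Lag hN X c ψ₁ hx.1
  have hcovB : ∀ k : Fin N, ∀ x ∈ A k, ∃ j, x ∈ B j := fun k x hx =>
    exists_mem_Lag hN X c ψ₂ hx.1
  have ha : ∀ i, (μ (A i)).toReal = lam₁ i := hG₁
  have hb : ∀ i, (μ (B i)).toReal = lam₂ i := hG₂
  -- the two one-sided estimates
  have hAB1 : ∀ i, (μ (A i \ B i)).toReal ≤ ∑ k, |lam₁ k - lam₂ k| := fun i =>
    aux_diff_bound μ A B Z (fun i => ψ₁ i - ψ₂ i) lam₁ lam₂ hZ0 hZm hAm hBm hcovA hd hdZ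
      hBdisj ha hb i
  have hAB2 : ∀ i, (μ (B i \ A i)).toReal ≤ ∑ k, |lam₁ k - lam₂ k| := by
    intro i
    have h := aux_diff_bound μ B A Z (fun i => ψ₂ i - ψ₁ i) lam₂ lam₁ hZ0 hZm hBm hAm hcovB
      (fun x i k hxB hxA => by
        have h' := hd x k i hxA hxB
        show ψ₂ i - ψ₁ i ≤ ψ₂ k - ψ₁ k
        linarith)
      (fun x i k hik hxB hxA he => by
        have he' : ψ₂ i - ψ₁ i = ψ₂ k - ψ₁ k := he
        exact hdZ x k i (Ne.symm hik) hxA hxB (by linarith))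
      hAdisj hb ha i
    refine h.trans (le_of_eq ?_)
    exact Finset.sum_congr rfl fun k _ => abs_sub_comm _ _
  have hsd : ∀ i, (μ (symmDiff (A i) (B i))).toReal ≤ 2 * ∑ k, |lam₁ k - lam₂ k| := by
    intro i
    have h1 : μ (symmDiff (A i) (B i)) ≤ μ (A i \ B i) + μ (B i \ A i) := by
      rw [Set.symmDiff_def]
      exact measure_union_le _ _
    have h2 : (μ (symmDiff (A i) (B i))).toReal
        ≤ (μ (A i \ B i)).toReal + (μ (B i \ A i)).toReal := by
      rw [← ENNReal.toReal_add (measure_ne_top μ _) (measure_ne_top μ _)]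
      exact ENNReal.toReal_mono
        (ENNReal.add_ne_top.2 ⟨measure_ne_top μ _, measure_ne_top μ _⟩) h1
    linarith [hAB1 i, hAB2 i]
  have hε : 0 ≤ ∑ k, |lam₁ k - lam₂ k| := Finset.sum_nonneg fun k _ => abs_nonneg _
  calc ∑ i, (μ (symmDiff (A i) (B i))).toReal
      ≤ ∑ _i : Fin N, 2 * ∑ k, |lam₁ k - lam₂ k| := Finset.sum_le_sum fun i _ => hsd i
    _ = (N : ℝ) * (2 * ∑ k, |lam₁ k - lam₂ k|) := by
        rw [Finset.sum_const, Finset.card_univ, Fintype.card_fin, nsmul_eq_mul]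
    _ ≤ 4 * N * ∑ i, |lam₁ i - lam₂ i| := by
        nlinarith [Nat.cast_nonneg (α := ℝ) N, hε]
end
end

section
/- Suppose c satisfies (Reg), (Twist), and (QC), and X is compact, connected, with Lipschitz boundary, and c-convex with respect to Y. Then there exists a constant C > 0 depending only on n, ℒ(X), ℋ^{n−1}(∂X), C_∇, and the (n/(n−1),1)-Poincaré–Wirtinger constant of normalized Lebesgue measure on X, such that for all ψ₁, ψ₂ ∈ ℝᴺ with ⟨ψ₁ − ψ₂, 𝟙⟩ = 0, all cells Lag_i(ψ₁), Lag_i(ψ₂) nonempty, and max(min_i ℒ(Lag_i(ψ₁)), min_i ℒ(Lag_i(ψ₂))) > 0: sup_{x∈X} |ψ₁^{c*}(x) − ψ₂^{c*}(x)| ≤ C N⁴ √(Σ_{i=1}^N d_H(Lag_i(ψ₁), Lag_i(ψ₂))²) / (max(min_i ℒ(Lag_i(ψ₁)), min_i ℒ(Lag_i(ψ₂))))^{1−1/n}. -/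
open MeasureTheory Metric Set Filter Bornology
open scoped RealInnerProductSpace ENNReal NNReal Topology symmDiff

noncomputable section

set_option maxHeartbeats 1000000

/-- A polygonal chain from `a` to `b` inside `X` of total length at most `ℓ`. -/
def Chain {n : ℕ} (X : Set (Euc n)) (a b : Euc n) (ℓ : ℝ) : Prop :=
  ∃ (m : ℕ) (p : ℕ → Euc n), p 0 = a ∧ p m = b ∧
    (∀ j < m, segment ℝ (p j) (p (j+1)) ⊆ X) ∧
    (∑ j ∈ Finset.range m, ‖p (j+1) - p j‖) ≤ ℓ

namespace Chain

theorem refl {n : ℕ} (X : Set (Euc n)) (a : Euc n) : Chain X a a 0 :=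
  ⟨0, fun _ => a, rfl, rfl, by simp, by simp⟩

theorem mono {n : ℕ} {X : Set (Euc n)} {a b : Euc n} {ℓ ℓ' : ℝ} (h : Chain X a b ℓ)
    (hle : ℓ ≤ ℓ') : Chain X a b ℓ' := by
  obtain ⟨m, p, h0, hm, hseg, hsum⟩ := h
  exact ⟨m, p, h0, hm, hseg, hsum.trans hle⟩

theorem single {n : ℕ} {X : Set (Euc n)} {a b : Euc n} (h : segment ℝ a b ⊆ X) :
    Chain X a b (dist a b) := by
  refine ⟨1, fun j => if j = 0 then a else b, by simp, by simp, ?_, ?_⟩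
  · intro j hj
    interval_cases j
    simpa using h
  · simp [dist_eq_norm, norm_sub_rev]

theorem trans {n : ℕ} {X : Set (Euc n)} {a b c : Euc n} {ℓ₁ ℓ₂ : ℝ}
    (h1 : Chain X a b ℓ₁) (h2 : Chain X b c ℓ₂) : Chain X a c (ℓ₁ + ℓ₂) := by
  obtain ⟨m₁, p, hp0, hpm, hpseg, hpsum⟩ := h1
  obtain ⟨m₂, q, hq0, hqm, hqseg, hqsum⟩ := h2
  refine ⟨m₁ + m₂, fun j => if j ≤ m₁ then p j else q (j - m₁), by simp [hp0], ?_, ?_, ?_⟩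
  · by_cases h : m₂ = 0
    · subst h; simp [hpm, hq0.symm.trans hqm]
    · have : ¬ (m₁ + m₂ ≤ m₁) := by omega
      simp [this, hqm]
  · intro j hj
    by_cases hj1 : j + 1 ≤ m₁
    · have hj0 : j ≤ m₁ := by omega
      simp only [hj0, hj1, if_pos]
      exact hpseg j (by omega)
    · by_cases hj0 : j ≤ m₁
      · have hjm : j = m₁ := by omega
        rw [hjm] at hj ⊢
        simp only [if_pos le_rfl, if_neg (show ¬ m₁ + 1 ≤ m₁ from by omega),
          show m₁ + 1 - m₁ = 1 from by omega, hpm, ← hq0]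
        exact hqseg 0 (by omega)
      · simp only [if_neg hj0, if_neg (show ¬ j + 1 ≤ m₁ from hj1),
          show j + 1 - m₁ = (j - m₁) + 1 from by omega]
        exact hqseg (j - m₁) (by omega)
  · rw [Finset.sum_range_add]
    have e1 : ∀ j ∈ Finset.range m₁,
        ‖(if j + 1 ≤ m₁ then p (j+1) else q (j+1-m₁)) - (if j ≤ m₁ then p j else q (j - m₁))‖
          = ‖p (j+1) - p j‖ := by
      intro j hj
      simp only [Finset.mem_range] at hj
      rw [if_pos (by omega), if_pos (by omega)]
    have e2 : ∀ j ∈ Finset.range m₂,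
        ‖(if m₁ + j + 1 ≤ m₁ then p (m₁+j+1) else q (m₁+j+1-m₁)) -
          (if m₁ + j ≤ m₁ then p (m₁+j) else q (m₁+j-m₁))‖ = ‖q (j+1) - q j‖ := by
      intro j hj
      by_cases hj0 : j = 0
      · subst hj0
        rw [if_neg (by omega), if_pos (by omega)]
        simp [hpm, hq0, show m₁ + 0 + 1 - m₁ = 1 from by omega]
      · rw [if_neg (by omega), if_neg (by omega),
          show m₁ + j + 1 - m₁ = j + 1 from by omega, show m₁ + j - m₁ = j from by omega]
    calc (∑ j ∈ Finset.range m₁, ‖(if j + 1 ≤ m₁ then p (j+1) else q (j+1-m₁)) - (if j ≤ m₁ then p j else q (j - m₁))‖)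
          + ∑ j ∈ Finset.range m₂, ‖(if m₁ + j + 1 ≤ m₁ then p (m₁+j+1) else q (m₁+j+1-m₁)) - (if m₁ + j ≤ m₁ then p (m₁+j) else q (m₁+j-m₁))‖
        = (∑ j ∈ Finset.range m₁, ‖p (j+1) - p j‖) + ∑ j ∈ Finset.range m₂, ‖q (j+1) - q j‖ := by
          rw [Finset.sum_congr rfl e1, Finset.sum_congr rfl e2]
      _ ≤ ℓ₁ + ℓ₂ := add_le_add hpsum hqsum

theorem symm {n : ℕ} {X : Set (Euc n)} {a b : Euc n} {ℓ : ℝ} (h : Chain X a b ℓ) :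
    Chain X b a ℓ := by
  obtain ⟨m, p, hp0, hpm, hpseg, hpsum⟩ := h
  refine ⟨m, fun j => p (m - j), by simp [hpm], by simp [hp0], ?_, ?_⟩
  · intro j hj
    have e1 : m - (j+1) + 1 = m - j := by omega
    have : segment ℝ (p (m - j)) (p (m - (j+1)))
        = segment ℝ (p (m - (j+1))) (p ((m - (j+1)) + 1)) := by
      rw [e1, segment_symm]
    rw [this]
    exact hpseg (m - (j+1)) (by omega)
  · have : (∑ j ∈ Finset.range m, ‖p (m - (j+1)) - p (m - j)‖)
        = ∑ j ∈ Finset.range m, ‖p (j+1) - p j‖ := by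
      rw [← Finset.sum_range_reflect]
      apply Finset.sum_congr rfl
      intro j hj
      simp only [Finset.mem_range] at hj
      rw [norm_sub_rev]
      have e1 : m - (m - 1 - j + 1) = j := by omega
      have e2 : m - (m - 1 - j) = j + 1 := by omega
      rw [e1, e2]
    rw [this]; exact hpsum

end Chain


/-- A function with derivative bounded by `M` on `X` changes by at most `M ℓ` along a chain. -/
theorem abs_sub_le_of_chain {n : ℕ} {X : Set (Euc n)} {a b : Euc n} {ℓ : ℝ}
    (hch : Chain X a b ℓ) {f : Euc n → ℝ} (hf : Differentiable ℝ f) {M : ℝ} (hM : 0 ≤ M)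
    (hgrad : ∀ x ∈ X, ‖fderiv ℝ f x‖ ≤ M) : |f b - f a| ≤ M * ℓ := by
  obtain ⟨m, p, hp0, hpm, hseg, hsum⟩ := hch
  have key : ∀ k ≤ m, |f (p k) - f (p 0)| ≤ M * ∑ j ∈ Finset.range k, ‖p (j+1) - p j‖ := by
    intro k hk
    induction k with
    | zero => simp
    | succ k ih =>
      have hstep : |f (p (k+1)) - f (p k)| ≤ M * ‖p (k+1) - p k‖ := by
        have := Convex.norm_image_sub_le_of_norm_fderiv_le
          (fun x _ => hf.differentiableAt) (fun x hx => hgrad x (hseg k (by omega) hx))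
          (convex_segment (p k) (p (k+1))) (left_mem_segment ℝ _ _) (right_mem_segment ℝ _ _)
        simpa [Real.norm_eq_abs] using this
      calc |f (p (k+1)) - f (p 0)| ≤ |f (p (k+1)) - f (p k)| + |f (p k) - f (p 0)| := by
            have := abs_sub_le (f (p (k+1))) (f (p k)) (f (p 0)); linarith [abs_sub_abs_le_abs_sub (f (p (k+1))) (f (p k))]
        _ ≤ M * ‖p (k+1) - p k‖ + M * ∑ j ∈ Finset.range k, ‖p (j+1) - p j‖ :=
            add_le_add hstep (ih (by omega))
        _ = M * ∑ j ∈ Finset.range (k+1), ‖p (j+1) - p j‖ := by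
            rw [Finset.sum_range_succ]; ring
  have := key m le_rfl
  rw [hp0, hpm] at this
  exact this.trans (by nlinarith [hsum])


theorem local_chain_frontier {n : ℕ} {X : Set (Euc n)} {x : Euc n} (v : Euc n)
    (g : Euc n → ℝ) (K : NNReal) (r : ℝ) (hr : 0 < r) (hv : ‖v‖ = 1)
    (hK : LipschitzWith K g)
    (hchart : ∀ z ∈ ball x r, (z ∈ X ↔ g (z - ⟪z, v⟫ • v) ≤ ⟪z, v⟫)) :
    ∃ ρ > 0, ∃ Λ : ℝ, 1 ≤ Λ ∧
      ∀ a ∈ X ∩ ball x ρ, ∀ b ∈ X ∩ ball x ρ, Chain X a b (Λ * dist a b) := by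
  have hK0 : (0:ℝ) ≤ (K:ℝ) := K.coe_nonneg
  set ρ : ℝ := r / (4 * ((K:ℝ) + 1)) with hρdef
  have hρ0 : 0 < ρ := by positivity
  have hρr : ρ ≤ r := by
    rw [hρdef, div_le_iff₀ (by positivity)]
    nlinarith
  refine ⟨ρ, hρ0, 4 * ((K:ℝ) + 1), by nlinarith, ?_⟩
  rintro a ⟨haX, haB⟩ b ⟨hbX, hbB⟩
  have hballρr : ball x ρ ⊆ ball x r := ball_subset_ball hρr
  have hvv : ⟪v, v⟫ = (1:ℝ) := by
    rw [real_inner_self_eq_norm_mul_norm, hv]; ring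
  set ta : ℝ := ⟪a, v⟫ with htadef
  set tb : ℝ := ⟪b, v⟫ with htbdef
  set πa : Euc n := a - ta • v with hπadef
  set πb : Euc n := b - tb • v with hπbdef
  set d : ℝ := ‖a - b‖ with hddef
  have hd0 : 0 ≤ d := norm_nonneg _
  set t : ℝ := max ta tb + (K:ℝ) * ‖πa - πb‖ with htdef
  have habd : |ta - tb| ≤ d := by
    rw [htadef, htbdef, ← inner_sub_left]
    calc |⟪a - b, v⟫| ≤ ‖a - b‖ * ‖v‖ := abs_real_inner_le_norm _ _
      _ = d := by rw [hv, hddef]; ring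
  have hπd : ‖πa - πb‖ ≤ 2 * d := by
    have e : πa - πb = (a - b) - (ta - tb) • v := by
      rw [hπadef, hπbdef, sub_smul]; abel
    rw [e]
    calc ‖(a - b) - (ta - tb) • v‖ ≤ ‖a - b‖ + ‖(ta - tb) • v‖ := norm_sub_le _ _
      _ = d + |ta - tb| := by rw [norm_smul, hv, Real.norm_eq_abs, mul_one]
      _ ≤ 2 * d := by linarith
  have hta0 : 0 ≤ t - ta := by
    have : ta ≤ max ta tb := le_max_left _ _
    have h2 : 0 ≤ (K:ℝ) * ‖πa - πb‖ := by positivity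
    rw [htdef]; linarith
  have htb0 : 0 ≤ t - tb := by
    have : tb ≤ max ta tb := le_max_right _ _
    have h2 : 0 ≤ (K:ℝ) * ‖πa - πb‖ := by positivity
    rw [htdef]; linarith
  have htaB : t - ta ≤ (1 + 2 * (K:ℝ)) * d := by
    have h1 : max ta tb - ta ≤ |ta - tb| := by
      rcases max_cases ta tb with ⟨h, _⟩ | ⟨h, _⟩ <;> rw [h] <;>
        [linarith [abs_nonneg (ta - tb)]; linarith [neg_abs_le (ta - tb)]]
    have h2 : (K:ℝ) * ‖πa - πb‖ ≤ (K:ℝ) * (2 * d) := by nlinarith [norm_nonneg (πa - πb)]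
    rw [htdef]; nlinarith
  have htbB : t - tb ≤ (1 + 2 * (K:ℝ)) * d := by
    have h1 : max ta tb - tb ≤ |ta - tb| := by
      rcases max_cases ta tb with ⟨h, _⟩ | ⟨h, _⟩ <;> rw [h] <;>
        [linarith [le_abs_self (ta - tb)]; linarith [abs_nonneg (ta - tb)]]
    have h2 : (K:ℝ) * ‖πa - πb‖ ≤ (K:ℝ) * (2 * d) := by nlinarith [norm_nonneg (πa - πb)]
    rw [htdef]; nlinarith
  have hga : g πa ≤ ta := (hchart a (hballρr haB)).mp haX
  have hgb : g πb ≤ tb := (hchart b (hballρr hbB)).mp hbX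
  have hdlt : d < 2 * ρ := by
    have h1 : ‖a - x‖ < ρ := by rw [← dist_eq_norm]; exact mem_ball.mp haB
    have h2 : ‖x - b‖ < ρ := by
      rw [← dist_eq_norm, dist_comm]; exact mem_ball.mp hbB
    calc d = ‖(a - x) + (x - b)‖ := by rw [hddef]; congr 1; abel
      _ ≤ ‖a - x‖ + ‖x - b‖ := norm_add_le _ _
      _ < 2 * ρ := by linarith
  have memX : ∀ z : Euc n, z ∈ ball x r → g (z - ⟪z, v⟫ • v) ≤ ⟪z, v⟫ → z ∈ X :=
    fun z hz h => (hchart z hz).mpr h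
  -- points obtained by moving up from a point of the small ball stay in the big ball
  have hball : ∀ c : Euc n, c ∈ ball x ρ → ∀ s : ℝ, 0 ≤ s → s ≤ (1 + 2 * (K:ℝ)) * d →
      c + s • v ∈ ball x r := by
    intro c hc s hs0 hs1
    have h1 : ‖c - x‖ < ρ := by rw [← dist_eq_norm]; exact mem_ball.mp hc
    rw [mem_ball, dist_eq_norm]
    calc ‖c + s • v - x‖ = ‖(c - x) + s • v‖ := by congr 1; abel
      _ ≤ ‖c - x‖ + ‖s • v‖ := norm_add_le _ _
      _ = ‖c - x‖ + s := by rw [norm_smul, hv, Real.norm_eq_abs, abs_of_nonneg hs0, mul_one]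
      _ < ρ + (1 + 2 * (K:ℝ)) * (2 * ρ) := by nlinarith
      _ ≤ r := by
        have h4 : ρ * (4 * ((K:ℝ) + 1)) = r := by rw [hρdef]; field_simp
        nlinarith [hρ0.le, hK0]
  -- moving straight up from a point of `X` in the small ball stays in `X`
  have hvert : ∀ c : Euc n, c ∈ X → c ∈ ball x ρ → ∀ s : ℝ, 0 ≤ s →
      s ≤ (1 + 2 * (K:ℝ)) * d → c + s • v ∈ X := by
    intro c hcX hc s hs0 hs1
    apply memX _ (hball c hc s hs0 hs1)
    have h1 : ⟪c + s • v, v⟫ = ⟪c, v⟫ + s := by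
      rw [inner_add_left, real_inner_smul_left, hvv]; ring
    rw [h1]
    have h2 : (c + s • v) - (⟪c, v⟫ + s) • v = c - ⟪c, v⟫ • v := by
      rw [add_smul]; abel
    rw [h2]
    have h3 := (hchart c (hballρr hc)).mp hcX
    linarith
  have hsubseg : ∀ c : Euc n, c ∈ X → c ∈ ball x ρ → ∀ s : ℝ, 0 ≤ s →
      s ≤ (1 + 2 * (K:ℝ)) * d → segment ℝ c (c + s • v) ⊆ X := by
    intro c hcX hc s hs0 hs1 z hz
    rw [segment_eq_image'] at hz
    obtain ⟨θ, ⟨hθ0, hθ1⟩, rfl⟩ := hz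
    have e : c + s • v - c = s • v := by abel
    simp only [e, smul_smul]
    exact hvert c hcX hc (θ * s) (by positivity) (by nlinarith)
  set a' : Euc n := a + (t - ta) • v with ha'def
  set b' : Euc n := b + (t - tb) • v with hb'def
  have hseg1 : segment ℝ a a' ⊆ X := hsubseg a haX haB (t - ta) hta0 htaB
  have hseg3 : segment ℝ b b' ⊆ X := hsubseg b hbX hbB (t - tb) htb0 htbB
  have ha'ball : a' ∈ ball x r := hball a haB (t - ta) hta0 htaB
  have hb'ball : b' ∈ ball x r := hball b hbB (t - tb) htb0 htbB
  have hπav : ⟪πa, v⟫ = 0 := by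
    rw [hπadef, inner_sub_left, real_inner_smul_left, hvv, htadef]; ring
  have hπbv : ⟪πb, v⟫ = 0 := by
    rw [hπbdef, inner_sub_left, real_inner_smul_left, hvv, htbdef]; ring
  have ea' : a' = πa + t • v := by rw [ha'def, hπadef, sub_smul]; abel
  have eb' : b' = πb + t • v := by rw [hb'def, hπbdef, sub_smul]; abel
  have hseg2 : segment ℝ a' b' ⊆ X := by
    intro z hz
    have hzball : z ∈ ball x r := (convex_ball x r).segment_subset ha'ball hb'ball hz
    apply memX z hzball
    rw [segment_eq_image'] at hz
    obtain ⟨θ, ⟨hθ0, hθ1⟩, rfl⟩ := hz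
    have eab : b' - a' = πb - πa := by rw [ea', eb']; abel
    have h1 : ⟪a' + θ • (b' - a'), v⟫ = t := by
      rw [eab, ea']
      simp only [inner_add_left, inner_sub_left, real_inner_smul_left, hπav, hπbv, hvv]
      ring
    rw [h1]
    have h2 : (a' + θ • (b' - a')) - t • v = πa + θ • (πb - πa) := by
      rw [eab, ea']; abel
    rw [h2]
    have h3 : g (πa + θ • (πb - πa)) ≤ g πa + (K:ℝ) * ‖θ • (πb - πa)‖ := by
      have hdist := hK.dist_le_mul (πa + θ • (πb - πa)) πa
      rw [Real.dist_eq, dist_eq_norm] at hdist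
      have e2 : πa + θ • (πb - πa) - πa = θ • (πb - πa) := by abel
      rw [e2] at hdist
      have h5 := le_abs_self (g (πa + θ • (πb - πa)) - g πa)
      linarith
    have h4 : ‖θ • (πb - πa)‖ ≤ ‖πa - πb‖ := by
      rw [norm_smul, Real.norm_eq_abs, abs_of_nonneg hθ0, norm_sub_rev (πb) (πa)]
      nlinarith [norm_nonneg (πa - πb)]
    have h5 : g πa + (K:ℝ) * ‖θ • (πb - πa)‖ ≤ ta + (K:ℝ) * ‖πa - πb‖ := by nlinarith
    have h6 : ta ≤ max ta tb := le_max_left _ _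
    rw [htdef]; linarith
  -- assemble the chain
  have c1 : Chain X a a' (dist a a') := Chain.single hseg1
  have c2 : Chain X a' b' (dist a' b') := Chain.single hseg2
  have c3 : Chain X b' b (dist b' b) :=
    Chain.single (by rw [segment_symm]; exact hseg3)
  have cc : Chain X a b (dist a a' + (dist a' b' + dist b' b)) :=
    c1.trans (c2.trans c3)
  apply cc.mono
  have e1 : dist a a' = t - ta := by
    have e : a - a' = -((t - ta) • v) := by rw [ha'def]; abel
    rw [dist_eq_norm, e, norm_neg, norm_smul, hv, Real.norm_eq_abs,
      abs_of_nonneg hta0, mul_one]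
  have e3 : dist b' b = t - tb := by
    have e : b' - b = (t - tb) • v := by rw [hb'def]; abel
    rw [dist_eq_norm, e, norm_smul, hv, Real.norm_eq_abs, abs_of_nonneg htb0, mul_one]
  have e2 : dist a' b' = ‖πa - πb‖ := by
    have e : a' - b' = πa - πb := by rw [ea', eb']; abel
    rw [dist_eq_norm, e]
  have e4 : dist a b = d := by rw [dist_eq_norm, hddef]
  rw [e1, e2, e3, e4]
  nlinarith [hπd, htaB, htbB, hd0, hK0]


theorem local_chain {n : ℕ} {X : Set (Euc n)} (hXlip : HasLipschitzBoundary X)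
    (hXcl : IsClosed X) :
    ∀ x ∈ X, ∃ ρ > 0, ∃ Λ : ℝ, 1 ≤ Λ ∧
      ∀ a ∈ X ∩ ball x ρ, ∀ b ∈ X ∩ ball x ρ, Chain X a b (Λ * dist a b) := by
  intro x hx
  by_cases hint : x ∈ interior X
  · obtain ⟨r, hr0, hball⟩ := Metric.mem_nhds_iff.mp (mem_interior_iff_mem_nhds.mp hint)
    refine ⟨r, hr0, 1, le_rfl, ?_⟩
    rintro a ⟨haX, haB⟩ b ⟨hbX, hbB⟩
    have hseg : segment ℝ a b ⊆ X :=
      fun z hz => hball ((convex_ball x r).segment_subset haB hbB hz)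
    exact (Chain.single hseg).mono (by rw [one_mul])
  · have hfr : x ∈ frontier X := by
      rw [frontier, hXcl.closure_eq]; exact ⟨hx, hint⟩
    obtain ⟨v, g, K, r, hr, hv, hK, hchart⟩ := hXlip x hfr
    exact local_chain_frontier v g K r hr hv hK hchart

theorem uniform_local_chain {n : ℕ} {X : Set (Euc n)} (hXcpt : IsCompact X)
    (hXlip : HasLipschitzBoundary X) :
    ∃ δ > 0, ∃ Λ₀ : ℝ, 1 ≤ Λ₀ ∧
      ∀ a ∈ X, ∀ b ∈ X, dist a b < δ → Chain X a b (Λ₀ * dist a b) := by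
  have hlc := local_chain hXlip hXcpt.isClosed
  choose! ρ hρ Λ hΛ hch using hlc
  have hcover : X ⊆ ⋃ x : X, ball (x : Euc n) (ρ x) := by
    intro z hz
    exact mem_iUnion.mpr ⟨⟨z, hz⟩, mem_ball_self (hρ z hz)⟩
  obtain ⟨t, ht⟩ := hXcpt.elim_finite_subcover (fun x : X => ball (x : Euc n) (ρ x))
    (fun _ => isOpen_ball) hcover
  set Λ₀ : ℝ := 1 + ∑ x ∈ t, Λ x with hΛ₀def
  have hΛ₀1 : 1 ≤ Λ₀ := by
    have : (0:ℝ) ≤ ∑ x ∈ t, Λ x :=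
      Finset.sum_nonneg fun x _ => le_trans zero_le_one (hΛ x x.2)
    rw [hΛ₀def]; linarith
  have hΛle : ∀ x ∈ t, Λ x ≤ Λ₀ := by
    intro x hxt
    have h1 : Λ x ≤ ∑ y ∈ t, Λ y :=
      Finset.single_le_sum (fun (y : X) (_ : y ∈ t) => le_trans zero_le_one (hΛ y y.2)) hxt
    rw [hΛ₀def]; linarith
  have hcov2 : X ⊆ ⋃ i : t, ball ((i : X) : Euc n) (ρ (i : X)) := by
    intro z hz
    obtain ⟨x, hxt, hzx⟩ := mem_iUnion₂.mp (ht hz)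
    exact mem_iUnion.mpr ⟨⟨x, hxt⟩, hzx⟩
  obtain ⟨δ, hδ0, hδ⟩ := lebesgue_number_lemma_of_metric hXcpt
    (fun i : t => isOpen_ball) hcov2
  refine ⟨δ, hδ0, Λ₀, hΛ₀1, ?_⟩
  intro a ha b hb hd
  obtain ⟨i, hi⟩ := hδ a ha
  have haB : a ∈ ball ((i : X) : Euc n) (ρ (i : X)) := hi (mem_ball_self hδ0)
  have hbB : b ∈ ball ((i : X) : Euc n) (ρ (i : X)) := hi (by rwa [mem_ball, dist_comm])
  have := hch (i : X) (i : X).2 a ⟨ha, haB⟩ b ⟨hb, hbB⟩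
  exact this.mono (by nlinarith [dist_nonneg (x := a) (y := b), hΛle (i : X) i.2])

theorem chain_connected {n : ℕ} {X : Set (Euc n)} (hconn : IsPreconnected X)
    {δ Λ₀ : ℝ} (hδ0 : 0 < δ)
    (huloc : ∀ a ∈ X, ∀ b ∈ X, dist a b < δ → Chain X a b (Λ₀ * dist a b)) :
    ∀ a ∈ X, ∀ b ∈ X, ∃ ℓ, Chain X a b ℓ := by
  intro a ha
  by_contra hcon
  push_neg at hcon
  obtain ⟨b, hb, hbbad⟩ := hcon
  set U : Set (Euc n) := ⋃ c ∈ {c | c ∈ X ∧ ∃ ℓ, Chain X a c ℓ}, ball c δ with hU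
  set V : Set (Euc n) := ⋃ c ∈ {c | c ∈ X ∧ ¬ ∃ ℓ, Chain X a c ℓ}, ball c δ with hV
  have hUopen : IsOpen U := isOpen_biUnion fun _ _ => isOpen_ball
  have hVopen : IsOpen V := isOpen_biUnion fun _ _ => isOpen_ball
  have hcover : X ⊆ U ∪ V := by
    intro z hz
    by_cases h : ∃ ℓ, Chain X a z ℓ
    · exact Or.inl (mem_biUnion (show z ∈ {c | c ∈ X ∧ ∃ ℓ, Chain X a c ℓ} from ⟨hz, h⟩)
        (mem_ball_self hδ0))
    · exact Or.inr (mem_biUnion (show z ∈ {c | c ∈ X ∧ ¬ ∃ ℓ, Chain X a c ℓ} from ⟨hz, h⟩)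
        (mem_ball_self hδ0))
  have hXU : (X ∩ U).Nonempty :=
    ⟨a, ha, mem_biUnion (show a ∈ {c | c ∈ X ∧ ∃ ℓ, Chain X a c ℓ} from ⟨ha, 0, Chain.refl X a⟩)
      (mem_ball_self hδ0)⟩
  have hXV : (X ∩ V).Nonempty :=
    ⟨b, hb, mem_biUnion (show b ∈ {c | c ∈ X ∧ ¬ ∃ ℓ, Chain X a c ℓ} from ⟨hb, not_exists.mpr hbbad⟩)
      (mem_ball_self hδ0)⟩
  obtain ⟨w, hwX, hwU, hwV⟩ := hconn U V hUopen hVopen hcover hXU hXV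
  obtain ⟨c, ⟨hcX, ℓc, hcch⟩, hwc⟩ := mem_iUnion₂.mp hwU
  obtain ⟨c', ⟨hc'X, hc'bad⟩, hwc'⟩ := mem_iUnion₂.mp hwV
  apply hc'bad
  have h1 : Chain X c w (Λ₀ * dist c w) :=
    huloc c hcX w hwX (by rw [dist_comm]; exact mem_ball.mp hwc)
  have h2 : Chain X w c' (Λ₀ * dist w c') :=
    huloc w hwX c' hc'X (mem_ball.mp hwc')
  exact ⟨_, (hcch.trans h1).trans h2⟩

theorem chain_bounded {n : ℕ} {X : Set (Euc n)} (hXcpt : IsCompact X)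
    {δ Λ₀ : ℝ} (hδ0 : 0 < δ) (hΛ₀1 : 1 ≤ Λ₀)
    (huloc : ∀ a ∈ X, ∀ b ∈ X, dist a b < δ → Chain X a b (Λ₀ * dist a b))
    (hcc : ∀ a ∈ X, ∀ b ∈ X, ∃ ℓ, Chain X a b ℓ) :
    ∃ B : ℝ, 0 ≤ B ∧ ∀ a ∈ X, ∀ b ∈ X, Chain X a b B := by
  have hcover : X ⊆ ⋃ x : X, ball (x : Euc n) δ :=
    fun z hz => mem_iUnion.mpr ⟨⟨z, hz⟩, mem_ball_self hδ0⟩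
  obtain ⟨t, ht⟩ := hXcpt.elim_finite_subcover (fun x : X => ball (x : Euc n) δ)
    (fun _ => isOpen_ball) hcover
  choose! ℓf hℓf using fun (p : X) (q : X) => hcc p p.2 q q.2
  set M : ℝ := ∑ pq ∈ t ×ˢ t, |ℓf pq.1 pq.2| with hMdef
  have hM0 : 0 ≤ M := Finset.sum_nonneg fun _ _ => abs_nonneg _
  refine ⟨2 * (Λ₀ * δ) + M, by positivity, ?_⟩
  intro a ha b hb
  obtain ⟨p, hpt, hap⟩ : ∃ p ∈ t, a ∈ ball ((p : X) : Euc n) δ := by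
    obtain ⟨p, hpt, h⟩ := mem_iUnion₂.mp (ht ha); exact ⟨p, hpt, h⟩
  obtain ⟨q, hqt, hbq⟩ : ∃ q ∈ t, b ∈ ball ((q : X) : Euc n) δ := by
    obtain ⟨q, hqt, h⟩ := mem_iUnion₂.mp (ht hb); exact ⟨q, hqt, h⟩
  have h1 : Chain X a (p : Euc n) (Λ₀ * dist a (p : Euc n)) :=
    huloc a ha p p.2 (mem_ball.mp hap)
  have h2 : Chain X (p : Euc n) (q : Euc n) (ℓf p q) := hℓf p q
  have h3 : Chain X (q : Euc n) b (Λ₀ * dist (q : Euc n) b) :=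
    huloc q q.2 b hb (by rw [dist_comm]; exact mem_ball.mp hbq)
  have hd1 : dist a (p : Euc n) < δ := mem_ball.mp hap
  have hd2 : dist (q : Euc n) b < δ := by rw [dist_comm]; exact mem_ball.mp hbq
  have hℓM : ℓf p q ≤ M := by
    have h4 : |ℓf p q| ≤ M := by
      rw [hMdef]
      have hmem : ((p, q) : X × X) ∈ t ×ˢ t := Finset.mem_product.mpr ⟨hpt, hqt⟩
      exact Finset.single_le_sum (f := fun pq : X × X => |ℓf pq.1 pq.2|)
        (fun _ _ => abs_nonneg _) hmem
    exact (le_abs_self _).trans h4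
  refine ((h1.trans h2).trans h3).mono ?_
  have hΛ₀0 : (0:ℝ) ≤ Λ₀ := le_trans zero_le_one hΛ₀1
  nlinarith [dist_nonneg (x := a) (y := (p : Euc n)), dist_nonneg (x := (q : Euc n)) (y := b)]

theorem quasiconvex_of_lipschitz {n : ℕ} {X : Set (Euc n)} (hXcpt : IsCompact X)
    (hconn : IsPreconnected X) (hXlip : HasLipschitzBoundary X) :
    ∃ Λ : ℝ, 1 ≤ Λ ∧ ∀ a ∈ X, ∀ b ∈ X, Chain X a b (Λ * dist a b) := by
  obtain ⟨δ, hδ0, Λ₀, hΛ₀1, huloc⟩ := uniform_local_chain hXcpt hXlip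
  have hcc := chain_connected hconn hδ0 huloc
  obtain ⟨B, hB0, hB⟩ := chain_bounded hXcpt hδ0 hΛ₀1 huloc hcc
  refine ⟨Λ₀ + (B + 1) / δ, ?_, ?_⟩
  · have h0 : (0:ℝ) ≤ (B + 1) / δ := by positivity
    linarith
  · intro a ha b hb
    rcases lt_or_ge (dist a b) δ with h | h
    · refine (huloc a ha b hb h).mono ?_
      have h0 : (0:ℝ) ≤ (B + 1) / δ := by positivity
      nlinarith [dist_nonneg (x := a) (y := b)]
    · refine (hB a ha b hb).mono ?_
      have h1 : (B + 1) / δ * δ = B + 1 := div_mul_cancel₀ _ hδ0.ne'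
      have h2 : (B + 1) / δ * δ ≤ (B + 1) / δ * dist a b :=
        mul_le_mul_of_nonneg_left h (by positivity)
      nlinarith [dist_nonneg (x := a) (y := b), le_trans zero_le_one hΛ₀1]


/-- **Theorem 1.5: uniform stability of dual potentials.** -/
theorem stmt4 {n : ℕ} (hn : 2 ≤ n)
    (X : Set (Euc n)) (hXcpt : IsCompact X) (hXconn : IsConnected X)
    (hXlip : HasLipschitzBoundary X)
    (Cgrad CPW : ℝ) (hCPW : 0 < CPW)
    (hPW : PWIneq ((volume X)⁻¹ • volume.restrict X) ((n : ℝ) / ((n : ℝ) - 1)) CPW) :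
    ∃ C : ℝ, 0 < C ∧
      ∀ N : ℕ, 0 < N → ∀ c : Euc n → Fin N → ℝ, Reg c → Twist X c →
      (∀ x ∈ X, ∀ i, ‖gradient (fun z => c z i) x‖ ≤ Cgrad) →
      ∀ S : LoeperSystem X c, (∀ i, Convex ℝ (S.expInv i '' X)) →
      ∀ ψ₁ ψ₂ : Fin N → ℝ, (∑ j, (ψ₁ j - ψ₂ j)) = 0 →
        (∀ i, (Lag X c ψ₁ i).Nonempty ∧ (Lag X c ψ₂ i).Nonempty) →
        0 < max (⨅ i, (volume (Lag X c ψ₁ i)).toReal)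
              (⨅ i, (volume (Lag X c ψ₂ i)).toReal) →
        ∀ x ∈ X, |cStar c ψ₁ x - cStar c ψ₂ x| ≤
          C * N ^ 4 *
            Real.sqrt (∑ i, hausdorffDist (Lag X c ψ₁ i) (Lag X c ψ₂ i) ^ 2) /
          (max (⨅ i, (volume (Lag X c ψ₁ i)).toReal)
              (⨅ i, (volume (Lag X c ψ₂ i)).toReal)) ^ (1 - 1 / (n : ℝ)) := by
  obtain ⟨Λ, hΛ1, hqc⟩ := quasiconvex_of_lipschitz hXcpt hXconn.isPreconnected hXlip
  set V : ℝ := (volume X).toReal with hVdef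
  have hV0 : 0 ≤ V := ENNReal.toReal_nonneg
  set M₀ : ℝ := max V 1 with hM₀def
  have hM₀1 : 1 ≤ M₀ := le_max_right _ _
  set Cg : ℝ := max Cgrad 0 with hCgdef
  have hCg0 : 0 ≤ Cg := le_max_right _ _
  refine ⟨2 * Λ * (Cg + 1) * M₀, by nlinarith [hΛ1, hCg0, hM₀1, mul_pos (mul_pos (by linarith : (0:ℝ) < 2 * Λ) (by linarith : (0:ℝ) < Cg + 1)) (by linarith : (0:ℝ) < M₀)], ?_⟩
  intro N hN c hreg htwist hgradb S hSconv ψ₁ ψ₂ hsum hne hpos x hx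
  haveI : Nonempty (Fin N) := ⟨⟨0, hN⟩⟩
  set L : ℝ := 2 * Λ * Cg with hLdef
  have hL0 : 0 ≤ L := by nlinarith [mul_nonneg (by linarith : (0:ℝ) ≤ 2 * Λ) hCg0]
  have hdiffc : ∀ i, Differentiable ℝ (fun z => c z i) :=
    fun i => (hreg i).differentiable (by norm_num)
  -- uniform Lipschitz bound for differences of costs on `X`
  have hlip : ∀ i k : Fin N, ∀ w ∈ X, ∀ z ∈ X,
      (c z i - c z k) - (c w i - c w k) ≤ L * dist w z := by
    intro i k w hw z hz
    have hbound : ∀ y ∈ X, ‖fderiv ℝ (fun u => c u i - c u k) y‖ ≤ 2 * Cg := by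
      intro y hy
      have h1 : fderiv ℝ (fun u => c u i - c u k) y
          = fderiv ℝ (fun u => c u i) y - fderiv ℝ (fun u => c u k) y :=
        fderiv_sub ((hdiffc i).differentiableAt) ((hdiffc k).differentiableAt)
      rw [h1]
      have h2 : ∀ j : Fin N, ‖fderiv ℝ (fun u => c u j) y‖ ≤ Cg := by
        intro j
        have := hgradb y hy j
        have he : ‖gradient (fun z => c z j) y‖ = ‖fderiv ℝ (fun z => c z j) y‖ := by
          simp [gradient]
        rw [he] at this
        exact this.trans (le_max_left _ _)
      calc ‖fderiv ℝ (fun u => c u i) y - fderiv ℝ (fun u => c u k) y‖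
          ≤ ‖fderiv ℝ (fun u => c u i) y‖ + ‖fderiv ℝ (fun u => c u k) y‖ := norm_sub_le _ _
        _ ≤ 2 * Cg := by linarith [h2 i, h2 k]
    have habs := abs_sub_le_of_chain (hqc w hw z hz) ((hdiffc i).sub (hdiffc k))
      (by linarith : (0:ℝ) ≤ 2 * Cg) hbound
    have h3 : (c z i - c z k) - (c w i - c w k) ≤ |(c z i - c z k) - (c w i - c w k)| :=
      le_abs_self _
    have h4 : (2 * Cg) * (Λ * dist w z) = L * dist w z := by rw [hLdef]; ring
    calc (c z i - c z k) - (c w i - c w k)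
        ≤ |(c z i - c z k) - (c w i - c w k)| := h3
      _ ≤ (2 * Cg) * (Λ * dist w z) := habs
      _ = L * dist w z := h4
  -- cStar basics
  have hbddc : ∀ (ψ : Fin N → ℝ) (y : Euc n),
      BddAbove (Set.range fun i => -(c y i) - ψ i) := fun ψ y => (Set.finite_range _).bddAbove
  have hle_cStar : ∀ (ψ : Fin N → ℝ) (y : Euc n) (i : Fin N),
      -(c y i) - ψ i ≤ cStar c ψ y := fun ψ y i => le_ciSup (hbddc ψ y) i
  have hcStar_eq : ∀ (ψ : Fin N → ℝ) (y : Euc n), ∃ i, -(c y i) - ψ i = cStar c ψ y := by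
    intro ψ y
    obtain ⟨i, hi⟩ := Finite.exists_max (fun i => -(c y i) - ψ i)
    exact ⟨i, le_antisymm (hle_cStar ψ y i) (ciSup_le hi)⟩
  have hLag_sub : ∀ (ψ : Fin N → ℝ) (i : Fin N), Lag X c ψ i ⊆ X :=
    fun ψ i y hy => hy.1
  have hLag_closed : ∀ (ψ : Fin N → ℝ) (i : Fin N), IsClosed (Lag X c ψ i) := by
    intro ψ i
    have heq : Lag X c ψ i = X ∩ ⋂ k, {y | -(c y k) - ψ k ≤ -(c y i) - ψ i} := by
      ext y
      constructor
      · rintro ⟨hyX, hyeq⟩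
        exact ⟨hyX, mem_iInter.mpr fun k => (hle_cStar ψ y k).trans_eq hyeq.symm⟩
      · rintro ⟨hyX, hyle⟩
        exact ⟨hyX, le_antisymm (hle_cStar ψ y i) (ciSup_le fun k => mem_iInter.mp hyle k)⟩
    rw [heq]
    refine hXcpt.isClosed.inter (isClosed_iInter fun k => isClosed_le ?_ ?_)
    · exact ((hreg k).continuous.neg).sub continuous_const
    · exact ((hreg i).continuous.neg).sub continuous_const
  have hLag_cover : ∀ (ψ : Fin N → ℝ), ∀ y ∈ X, ∃ i, y ∈ Lag X c ψ i :=
    fun ψ y hy => (hcStar_eq ψ y).imp fun i hi => ⟨hy, hi⟩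
  set s : ℝ := Real.sqrt (∑ i, hausdorffDist (Lag X c ψ₁ i) (Lag X c ψ₂ i) ^ 2) with hsdef
  have hs0 : 0 ≤ s := Real.sqrt_nonneg _
  have hdHs : ∀ i : Fin N, hausdorffDist (Lag X c ψ₁ i) (Lag X c ψ₂ i) ≤ s := by
    intro i
    have h1 : hausdorffDist (Lag X c ψ₁ i) (Lag X c ψ₂ i) ^ 2
        ≤ ∑ j, hausdorffDist (Lag X c ψ₁ j) (Lag X c ψ₂ j) ^ 2 :=
      Finset.single_le_sum (f := fun j => hausdorffDist (Lag X c ψ₁ j) (Lag X c ψ₂ j) ^ 2)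
        (fun j _ => sq_nonneg _) (Finset.mem_univ i)
    calc hausdorffDist (Lag X c ψ₁ i) (Lag X c ψ₂ i)
        = Real.sqrt (hausdorffDist (Lag X c ψ₁ i) (Lag X c ψ₂ i) ^ 2) :=
          (Real.sqrt_sq hausdorffDist_nonneg).symm
      _ ≤ s := Real.sqrt_le_sqrt h1
  set d : Fin N → ℝ := fun i => ψ₂ i - ψ₁ i with hddef
  -- edge estimate
  have hedge : ∀ i k : Fin N, ∀ w : Euc n, w ∈ Lag X c ψ₁ i → w ∈ Lag X c ψ₁ k →
      d k - d i ≤ L * hausdorffDist (Lag X c ψ₁ k) (Lag X c ψ₂ k) := by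
    intro i k w hwi hwk
    have hwX : w ∈ X := hwi.1
    refine le_of_forall_pos_le_add ?_
    intro ε hε
    have hεL : 0 < ε / (L + 1) := div_pos hε (by linarith)
    have hbdd1 : IsBounded (Lag X c ψ₁ k) := hXcpt.isBounded.subset (hLag_sub _ _)
    have hbdd2 : IsBounded (Lag X c ψ₂ k) := hXcpt.isBounded.subset (hLag_sub _ _)
    have hedist : EMetric.hausdorffEdist (Lag X c ψ₁ k) (Lag X c ψ₂ k) ≠ ⊤ :=
      hausdorffEdist_ne_top_of_nonempty_of_bounded (hne k).1 (hne k).2 hbdd1 hbdd2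
    have hinf : infDist w (Lag X c ψ₂ k) ≤ hausdorffDist (Lag X c ψ₁ k) (Lag X c ψ₂ k) :=
      infDist_le_hausdorffDist_of_mem hwk hedist
    have hlt : infDist w (Lag X c ψ₂ k)
        < hausdorffDist (Lag X c ψ₁ k) (Lag X c ψ₂ k) + ε / (L + 1) := by linarith
    obtain ⟨z, hzLag, hz⟩ := (infDist_lt_iff (hne k).2).mp hlt
    have hzX : z ∈ X := hzLag.1
    have h1 : ψ₂ k - ψ₂ i ≤ c z i - c z k := by
      have h := hle_cStar ψ₂ z i
      rw [← hzLag.2] at h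
      linarith
    have h2 : c w i - c w k ≤ ψ₁ k - ψ₁ i := by
      have h := hle_cStar ψ₁ w k
      rw [← hwi.2] at h
      linarith
    have h3 := hlip i k w hwX z hzX
    have h5 : L * dist w z ≤ L * (hausdorffDist (Lag X c ψ₁ k) (Lag X c ψ₂ k) + ε / (L + 1)) :=
      mul_le_mul_of_nonneg_left hz.le hL0
    have h6 : L * (ε / (L + 1)) ≤ ε := by
      have hd1 : L / (L + 1) ≤ 1 := (div_le_one (by linarith)).mpr (by linarith)
      calc L * (ε / (L + 1)) = (L / (L + 1)) * ε := by ring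
        _ ≤ 1 * ε := mul_le_mul_of_nonneg_right hd1 hε.le
        _ = ε := one_mul ε
    have h7 : L * (hausdorffDist (Lag X c ψ₁ k) (Lag X c ψ₂ k) + ε / (L + 1))
        = L * hausdorffDist (Lag X c ψ₁ k) (Lag X c ψ₂ k) + L * (ε / (L + 1)) := by ring
    simp only [hddef]
    linarith
  -- growth step via connectedness
  have hgrow_step : ∀ P : Finset (Fin N), P.Nonempty → P ≠ Finset.univ →
      ∃ i ∈ P, ∃ k, k ∉ P ∧ (Lag X c ψ₁ i ∩ Lag X c ψ₁ k).Nonempty := by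
    intro P hPne hPuniv
    by_contra hcon
    push_neg at hcon
    set U : Set (Euc n) := ⋃ i ∈ P, Lag X c ψ₁ i with hUdef
    set W : Set (Euc n) := ⋃ k ∈ Pᶜ, Lag X c ψ₁ k with hWdef
    have hUclosed : IsClosed U := isClosed_biUnion_finset fun i _ => hLag_closed ψ₁ i
    have hWclosed : IsClosed W := isClosed_biUnion_finset fun k _ => hLag_closed ψ₁ k
    have hUW : U ∩ W = ∅ := by
      rw [eq_empty_iff_forall_notMem]
      rintro y ⟨hyU, hyW⟩
      obtain ⟨i, hiP, hyi⟩ := mem_iUnion₂.mp hyU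
      obtain ⟨k, hkP, hyk⟩ := mem_iUnion₂.mp hyW
      have h := hcon i hiP k (Finset.mem_compl.mp hkP)
      rw [eq_empty_iff_forall_notMem] at h
      exact h y ⟨hyi, hyk⟩
    have hcover : X ⊆ U ∪ W := by
      intro y hy
      obtain ⟨i, hyi⟩ := hLag_cover ψ₁ y hy
      by_cases hiP : i ∈ P
      · exact Or.inl (mem_biUnion hiP hyi)
      · exact Or.inr (mem_biUnion (Finset.mem_compl.mpr hiP) hyi)
    have hcover' : X ⊆ Wᶜ ∪ Uᶜ := by
      intro y hy
      by_cases hyU : y ∈ U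
      · left
        intro hyW
        rw [eq_empty_iff_forall_notMem] at hUW
        exact hUW y ⟨hyU, hyW⟩
      · right; exact hyU
    obtain ⟨i₁, hi₁P⟩ := hPne
    obtain ⟨y₁, hy₁⟩ := (hne i₁).1
    obtain ⟨k₁, hk₁P⟩ : ∃ k, k ∉ P := by
      by_contra h
      push_neg at h
      exact hPuniv (Finset.eq_univ_iff_forall.mpr h)
    obtain ⟨y₂, hy₂⟩ := (hne k₁).1
    have hXU' : (X ∩ Wᶜ).Nonempty := by
      refine ⟨y₁, hy₁.1, ?_⟩
      intro hyW
      rw [eq_empty_iff_forall_notMem] at hUW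
      exact hUW y₁ ⟨mem_biUnion hi₁P hy₁, hyW⟩
    have hXV' : (X ∩ Uᶜ).Nonempty := by
      refine ⟨y₂, hy₂.1, ?_⟩
      intro hyU
      rw [eq_empty_iff_forall_notMem] at hUW
      exact hUW y₂ ⟨hyU, mem_biUnion (Finset.mem_compl.mpr hk₁P) hy₂⟩
    obtain ⟨y₃, hy₃X, hy₃W, hy₃U⟩ := hXconn.isPreconnected Wᶜ Uᶜ hWclosed.isOpen_compl
      hUclosed.isOpen_compl hcover' hXU' hXV'
    rcases hcover hy₃X with h | h
    · exact hy₃U h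
    · exact hy₃W h
  obtain ⟨i₀, hi₀⟩ := Finite.exists_min d
  -- growth induction
  have hgrow : ∀ j : ℕ, ∀ P : Finset (Fin N), i₀ ∈ P →
      (∀ i ∈ P, d i ≤ d i₀ + L * s * ((P.card : ℝ) - 1)) →
      Fintype.card (Fin N) - P.card ≤ j → ∀ k, d k ≤ d i₀ + L * s * ((N : ℝ) - 1) := by
    intro j
    induction j with
    | zero =>
      intro P hi₀P hinv hcard k
      have hle : P.card ≤ Fintype.card (Fin N) := P.card_le_univ
      have hPuniv : P = Finset.univ := Finset.eq_univ_of_card P (by omega)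
      have hk := hinv k (hPuniv ▸ Finset.mem_univ k)
      rw [hPuniv, Finset.card_univ, Fintype.card_fin] at hk
      exact hk
    | succ j ih =>
      intro P hi₀P hinv hcard k
      by_cases hPuniv : P = Finset.univ
      · have hk := hinv k (hPuniv ▸ Finset.mem_univ k)
        rw [hPuniv, Finset.card_univ, Fintype.card_fin] at hk
        exact hk
      · obtain ⟨i, hiP, k', hk'P, w, hwi, hwk'⟩ := hgrow_step P ⟨i₀, hi₀P⟩ hPuniv
        have hcardins : ((insert k' P).card : ℝ) = (P.card : ℝ) + 1 := by
          rw [Finset.card_insert_of_notMem hk'P]; push_cast; ring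
        have hLs0 : 0 ≤ L * s := mul_nonneg hL0 hs0
        refine ih (insert k' P) (Finset.mem_insert_of_mem hi₀P) ?_ ?_ k
        · intro i' hi'
          rcases Finset.mem_insert.mp hi' with rfl | hi'P
          · have h1 := hedge i i' w hwi hwk'
            have h2 := hinv i hiP
            have h3 : L * hausdorffDist (Lag X c ψ₁ i') (Lag X c ψ₂ i') ≤ L * s :=
              mul_le_mul_of_nonneg_left (hdHs i') hL0
            rw [hcardins]
            have e : L * s * ((P.card : ℝ) + 1 - 1) = L * s * ((P.card : ℝ) - 1) + L * s := by
              ring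
            rw [e]
            linarith
          · have h2 := hinv i' hi'P
            rw [hcardins]
            nlinarith
        · rw [Finset.card_insert_of_notMem hk'P]
          omega
  have hsingl : ∀ i ∈ ({i₀} : Finset (Fin N)), d i ≤ d i₀ + L * s * ((({i₀} : Finset (Fin N)).card : ℝ) - 1) := by
    intro i hi
    rw [Finset.mem_singleton] at hi
    subst hi
    simp
  have hkey : ∀ k, d k ≤ d i₀ + L * s * ((N : ℝ) - 1) :=
    hgrow (Fintype.card (Fin N)) {i₀} (Finset.mem_singleton_self i₀) hsingl (by omega)
  -- pointwise bound on the difference of the transforms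
  obtain ⟨iM, hiM⟩ := Finite.exists_max d
  have hsd : ∑ j, d j = 0 := by
    have h : ∑ j, d j = -∑ j, (ψ₁ j - ψ₂ j) := by
      rw [← Finset.sum_neg_distrib]
      exact Finset.sum_congr rfl fun j _ => by simp [hddef]
    rw [h, hsum, neg_zero]
  have hNpos : (0:ℝ) < (N : ℝ) := by exact_mod_cast hN
  have hmax0 : 0 ≤ d iM := by
    have h := Finset.sum_le_sum (fun j (_ : j ∈ Finset.univ) => hiM j)
    rw [hsd, Finset.sum_const, Finset.card_univ, Fintype.card_fin, nsmul_eq_mul] at h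
    nlinarith
  have hmin0 : d i₀ ≤ 0 := by
    have h := Finset.sum_le_sum (fun j (_ : j ∈ Finset.univ) => hi₀ j)
    rw [hsd, Finset.sum_const, Finset.card_univ, Fintype.card_fin, nsmul_eq_mul] at h
    nlinarith
  have hup : cStar c ψ₁ x - cStar c ψ₂ x ≤ d iM := by
    have h1 : cStar c ψ₁ x ≤ cStar c ψ₂ x + d iM := by
      apply ciSup_le
      intro i
      have h2 := hle_cStar ψ₂ x i
      have h3 : d i ≤ d iM := hiM i
      have h4 : ψ₂ i - ψ₁ i ≤ d iM := by
        have : d i = ψ₂ i - ψ₁ i := by simp [hddef]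
        linarith
      linarith
    linarith
  have hdown : cStar c ψ₂ x - cStar c ψ₁ x ≤ -(d i₀) := by
    have h1 : cStar c ψ₂ x ≤ cStar c ψ₁ x - d i₀ := by
      apply ciSup_le
      intro i
      have h2 := hle_cStar ψ₁ x i
      have h3 : d i₀ ≤ d i := hi₀ i
      have h4 : d i₀ ≤ ψ₂ i - ψ₁ i := by
        have : d i = ψ₂ i - ψ₁ i := by simp [hddef]
        linarith
      linarith
    linarith
  have habs : |cStar c ψ₁ x - cStar c ψ₂ x| ≤ d iM - d i₀ :=
    abs_le.mpr ⟨by linarith, by linarith⟩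
  have hDB : d iM - d i₀ ≤ L * s * ((N : ℝ) - 1) := by
    have h := hkey iM
    linarith
  -- final assembly
  set m : ℝ := max (⨅ i, (volume (Lag X c ψ₁ i)).toReal)
      (⨅ i, (volume (Lag X c ψ₂ i)).toReal) with hmdef
  have hbddb : ∀ ψ : Fin N → ℝ,
      BddBelow (Set.range fun i => (volume (Lag X c ψ i)).toReal) :=
    fun ψ => ⟨0, by rintro _ ⟨i, rfl⟩; exact ENNReal.toReal_nonneg⟩
  have hinfle : ∀ ψ : Fin N → ℝ, (⨅ i, (volume (Lag X c ψ i)).toReal) ≤ V := by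
    intro ψ
    have h1 : (⨅ i, (volume (Lag X c ψ i)).toReal) ≤ (volume (Lag X c ψ i₀)).toReal :=
      ciInf_le (hbddb ψ) i₀
    have h2 : (volume (Lag X c ψ i₀)).toReal ≤ V :=
      ENNReal.toReal_mono hXcpt.measure_lt_top.ne (measure_mono (hLag_sub ψ i₀))
    linarith
  have hmV : m ≤ V := max_le (hinfle ψ₁) (hinfle ψ₂)
  have hn1 : (1:ℝ) ≤ (n:ℝ) := by exact_mod_cast (by omega : 1 ≤ n)
  have he0 : 0 ≤ 1 - 1/(n:ℝ) := by
    have h : 1/(n:ℝ) ≤ 1 := by rw [div_le_one (by linarith)]; linarith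
    linarith
  have he1 : 1 - 1/(n:ℝ) ≤ 1 := by
    have h : 0 ≤ 1/(n:ℝ) := by positivity
    linarith
  have hme_pos : 0 < m ^ (1 - 1/(n:ℝ)) := Real.rpow_pos_of_pos hpos _
  have hme_le : m ^ (1 - 1/(n:ℝ)) ≤ M₀ := by
    calc m ^ (1 - 1/(n:ℝ)) ≤ M₀ ^ (1 - 1/(n:ℝ)) :=
          Real.rpow_le_rpow hpos.le (hmV.trans (le_max_left _ _)) he0
      _ ≤ M₀ ^ (1:ℝ) := Real.rpow_le_rpow_of_exponent_le hM₀1 he1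
      _ = M₀ := Real.rpow_one _
  have hN1 : (1:ℝ) ≤ (N:ℝ) := by exact_mod_cast hN
  have hN4 : (N:ℝ) - 1 ≤ (N:ℝ)^4 := by
    have h1 : (N:ℝ)^1 ≤ (N:ℝ)^4 := pow_le_pow_right₀ hN1 (by norm_num)
    rw [pow_one] at h1
    linarith
  have hstep1 : Cg * ((N:ℝ) - 1) ≤ (Cg + 1) * (N:ℝ)^4 := by
    have h4 : (0:ℝ) ≤ (N:ℝ)^4 := by positivity
    nlinarith
  have h2Λ : (0:ℝ) ≤ 2 * Λ := by linarith
  have hstep2 : L * s * ((N:ℝ) - 1) ≤ 2 * Λ * (Cg + 1) * (N:ℝ)^4 * s := by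
    have h2 : 2 * Λ * (Cg * ((N:ℝ) - 1)) ≤ 2 * Λ * ((Cg + 1) * (N:ℝ)^4) :=
      mul_le_mul_of_nonneg_left hstep1 h2Λ
    have h3 : 2 * Λ * (Cg * ((N:ℝ) - 1)) * s ≤ 2 * Λ * ((Cg + 1) * (N:ℝ)^4) * s :=
      mul_le_mul_of_nonneg_right h2 hs0
    calc L * s * ((N:ℝ) - 1) = 2 * Λ * (Cg * ((N:ℝ) - 1)) * s := by rw [hLdef]; ring
      _ ≤ 2 * Λ * ((Cg + 1) * (N:ℝ)^4) * s := h3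
      _ = 2 * Λ * (Cg + 1) * (N:ℝ)^4 * s := by ring
  have hM₀pos : (0:ℝ) < M₀ := by linarith
  have hA0 : 0 ≤ 2 * Λ * (Cg + 1) * M₀ * (N:ℝ)^4 * s := by
    have := mul_nonneg (mul_nonneg (mul_nonneg (mul_nonneg h2Λ (by linarith : (0:ℝ) ≤ Cg + 1))
      hM₀pos.le) (by positivity : (0:ℝ) ≤ (N:ℝ)^4)) hs0
    linarith
  have hfrac : 2 * Λ * (Cg + 1) * M₀ * (N:ℝ)^4 * s / M₀
      ≤ 2 * Λ * (Cg + 1) * M₀ * (N:ℝ)^4 * s / m ^ (1 - 1/(n:ℝ)) := by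
    rw [div_eq_mul_inv, div_eq_mul_inv]
    exact mul_le_mul_of_nonneg_left (inv_anti₀ hme_pos hme_le) hA0
  calc |cStar c ψ₁ x - cStar c ψ₂ x| ≤ d iM - d i₀ := habs
    _ ≤ L * s * ((N:ℝ) - 1) := hDB
    _ ≤ 2 * Λ * (Cg + 1) * (N:ℝ)^4 * s := hstep2
    _ = 2 * Λ * (Cg + 1) * M₀ * (N:ℝ)^4 * s / M₀ := by
        field_simp
    _ ≤ 2 * Λ * (Cg + 1) * M₀ * (N:ℝ)^4 * s / m ^ (1 - 1/(n:ℝ)) := hfrac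
end
end

section
/- Suppose c satisfies (Reg) and (Twist) and μ is absolutely continuous. Then for any ψ₁, ψ₂ ∈ ℝᴺ the exchange digraph is acyclic; that is, there do not exist l ≥ 2 and distinct indices i_1,…,i_l ∈ {1,…,N} such that, setting i_{l+1} := i_1, one has μ(Lag_{i_j}(ψ₁) ∩ Lag_{i_{j+1}}(ψ₂)) > 0 for every j = 1,…,l. -/
open MeasureTheory Metric Set Filter Bornology
open scoped RealInnerProductSpace ENNReal NNReal Topology symmDiff

noncomputable section

lemma coord_le_norm {n : ℕ} (w : EuclideanSpace ℝ (Fin n)) (i : Fin n) : |w i| ≤ ‖w‖ := by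
  rw [EuclideanSpace.norm_eq]
  have h : ‖w i‖^2 ≤ ∑ j, ‖w j‖^2 :=
    Finset.single_le_sum (f := fun j => ‖w j‖^2) (fun j _ => sq_nonneg _) (Finset.mem_univ i)
  calc |w i| = Real.sqrt (‖w i‖^2) := by rw [Real.sqrt_sq_eq_abs, Real.norm_eq_abs, abs_abs]
  _ ≤ _ := Real.sqrt_le_sqrt h

/-- If `f` is differentiable at `x` with nonzero gradient and is constant on `S ∋ x`,
then `x` is not a Lebesgue density point of `S`. -/
lemma not_density_point {n : ℕ} (hn0 : 0 < n) {f : Euc n → ℝ} {g x : Euc n} {S : Set (Euc n)}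
    (hg : HasGradientAt f g x) (hgne : g ≠ 0) (hxS : x ∈ S)
    (hconst : ∀ y ∈ S, f y = f x) :
    ¬ Tendsto (fun r => volume (S ∩ closedBall x r) / volume (closedBall x r))
      (𝓝[>] (0:ℝ)) (𝓝 1) := by
  intro htend
  set C : ℝ≥0∞ := volume (ball (0 : Euc n) 1) with hC
  have hC0 : C ≠ 0 := (measure_ball_pos volume 0 one_pos).ne'
  have hCtop : C ≠ ⊤ := measure_ball_lt_top.ne
  set δ : ℝ := C.toReal / 2 ^ (n + 2) with hδdef
  have hδ : 0 < δ := div_pos (ENNReal.toReal_pos hC0 hCtop) (by positivity)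
  have hgnorm : (0:ℝ) < ‖g‖ := norm_pos_iff.mpr hgne
  set u : Euc n := ‖g‖⁻¹ • g with hu
  have hunorm : ‖u‖ = 1 := by
    rw [hu, norm_smul, norm_inv, norm_norm, inv_mul_cancel₀ hgnorm.ne']
  -- little-o estimate
  have hlo := (hasGradientAt_iff_isLittleO.mp hg).def (mul_pos hδ hgnorm)
  rw [Metric.eventually_nhds_iff] at hlo
  obtain ⟨r₀, hr₀, hball⟩ := hlo
  -- orthonormal basis with first vector u
  set i₀ : Fin n := ⟨0, hn0⟩ with hi₀
  have horth : Orthonormal ℝ ((({i₀} : Set (Fin n))).restrict (fun _ : Fin n => u)) := by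
    rw [orthonormal_iff_ite]
    intro i j
    have hij : i = j := Subsingleton.elim i j
    subst hij
    rw [if_pos rfl]
    show (inner ℝ u u : ℝ) = 1
    rw [real_inner_self_eq_norm_mul_norm, hunorm]; ring
  obtain ⟨b, hbmem⟩ := horth.exists_orthonormalBasis_extension_of_card_eq
    (by simp [finrank_euclideanSpace_fin])
  have hb : b i₀ = u := hbmem _ rfl
  -- main estimate : for 0 < r ≤ r₀/2, the density ratio is ≤ 4⁻¹
  have hmain : ∀ r : ℝ, r ∈ Ioc (0:ℝ) (r₀ / 2) →
      volume (S ∩ closedBall x r) / volume (closedBall x r) ≤ 4⁻¹ := by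
    rintro r ⟨hr, hrle⟩
    set I : Fin n → Set ℝ := fun i => Icc (-(if i = i₀ then δ * r else r)) (if i = i₀ then δ * r else r) with hI
    set T : Set (Euc n) := {z | |⟪u, z⟫| ≤ δ * r ∧ ‖z‖ ≤ r} with hT
    -- step 1 : S ∩ closedBall x r ⊆ (· + -x) ⁻¹' T
    have hsub : S ∩ closedBall x r ⊆ (fun y => y + -x) ⁻¹' T := by
      rintro y ⟨hyS, hyB⟩
      have hdist : ‖y - x‖ ≤ r := by
        rw [← dist_eq_norm]; exact mem_closedBall.mp hyB
      have hlt : dist y x < r₀ := lt_of_le_of_lt (mem_closedBall.mp hyB) (by linarith)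
      have hest := hball hlt
      rw [hconst y hyS] at hest
      simp only [sub_self, zero_sub, norm_neg] at hest
      have hinner : |⟪g, y - x⟫| ≤ δ * ‖g‖ * r := by
        have h1 : |⟪g, y - x⟫| ≤ δ * ‖g‖ * ‖y - x‖ := by
          simpa [Real.norm_eq_abs] using hest
        calc |⟪g, y - x⟫| ≤ δ * ‖g‖ * ‖y - x‖ := h1
        _ ≤ δ * ‖g‖ * r := by
          exact mul_le_mul_of_nonneg_left hdist (by positivity)
      constructor
      · show |⟪u, y + -x⟫| ≤ δ * r
        have : ⟪u, y + -x⟫ = ‖g‖⁻¹ * ⟪g, y - x⟫ := by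
          rw [hu, real_inner_smul_left]; rw [sub_eq_add_neg]
        rw [this, abs_mul, abs_of_nonneg (inv_nonneg.mpr hgnorm.le)]
        calc ‖g‖⁻¹ * |⟪g, y - x⟫| ≤ ‖g‖⁻¹ * (δ * ‖g‖ * r) :=
          mul_le_mul_of_nonneg_left hinner (inv_nonneg.mpr hgnorm.le)
        _ = δ * r := by field_simp
      · show ‖y + -x‖ ≤ r
        rw [← sub_eq_add_neg]; exact hdist
    -- step 2 : T ⊆ b.repr ⁻¹' (box)
    have hsub2 : T ⊆ b.repr ⁻¹' ((MeasurableEquiv.toLp 2 (Fin n → ℝ)).symm ⁻¹' (Set.univ.pi I)) := by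
      rintro z ⟨hz1, hz2⟩
      intro i _
      show b.repr z i ∈ I i
      by_cases hii : i = i₀
      · have hIeq : I i = Icc (-(δ * r)) (δ * r) := by simp [hI, hii]
        rw [hIeq]
        have : b.repr z i = ⟪u, z⟫ := by rw [hii, b.repr_apply_apply, hb]
        rw [this]
        exact abs_le.mp hz1
      · have hIeq : I i = Icc (-r) r := by simp [hI, hii]
        rw [hIeq]
        refine abs_le.mp ?_
        calc |b.repr z i| ≤ ‖b.repr z‖ := coord_le_norm _ _
        _ = ‖z‖ := b.repr.norm_map z
        _ ≤ r := hz2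
    -- step 3 : volume bounds
    have hvolT : volume (S ∩ closedBall x r) ≤ C / 4 * ENNReal.ofReal (r ^ n) := by
      have h1 : volume (S ∩ closedBall x r) ≤ volume ((fun y => y + -x) ⁻¹' T) :=
        measure_mono hsub
      have h2 : volume ((fun y => y + -x) ⁻¹' T) = volume T := measure_preimage_add_right _ _ _
      have h3 : volume T ≤ volume (b.repr ⁻¹'
          ((MeasurableEquiv.toLp 2 (Fin n → ℝ)).symm ⁻¹' (Set.univ.pi I))) := measure_mono hsub2
      have h4 : volume (b.repr ⁻¹'
          ((MeasurableEquiv.toLp 2 (Fin n → ℝ)).symm ⁻¹' (Set.univ.pi I))) = ∏ i, volume (I i) := by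
        rw [b.measurePreserving_repr.measure_preimage, (EuclideanSpace.volume_preserving_symm_measurableEquiv_toLp
          (Fin n)).measure_preimage (MeasurableSet.univ_pi (fun i => measurableSet_Icc)).nullMeasurableSet,
          volume_pi_pi]
        exact ((MeasurableSet.univ_pi (fun i => measurableSet_Icc)).preimage
          (MeasurableEquiv.toLp 2 (Fin n → ℝ)).symm.measurable).nullMeasurableSet
      have h5 : ∏ i, volume (I i) = ENNReal.ofReal (2 * (δ * r)) * ENNReal.ofReal (2 * r) ^ (n - 1) := by
        have heach : ∀ i : Fin n, volume (I i) =
            ENNReal.ofReal (2 * (if i = i₀ then δ * r else r)) := by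
          intro i
          rw [hI]
          rw [Real.volume_Icc]
          congr 1; ring
        rw [← Finset.mul_prod_erase Finset.univ _ (Finset.mem_univ i₀)]
        rw [heach i₀, if_pos rfl]
        congr 1
        rw [Finset.prod_congr rfl (fun i hi => by
          rw [heach i, if_neg (Finset.ne_of_mem_erase hi)])]
        rw [Finset.prod_const, Finset.card_erase_of_mem (Finset.mem_univ i₀),
          Finset.card_univ, Fintype.card_fin]
      have h6 : ENNReal.ofReal (2 * (δ * r)) * ENNReal.ofReal (2 * r) ^ (n - 1)
          = C / 4 * ENNReal.ofReal (r ^ n) := by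
        rw [← ENNReal.ofReal_pow (by positivity), ← ENNReal.ofReal_mul (by positivity)]
        have hr' : 2 * (δ * r) * (2 * r) ^ (n - 1) = C.toReal / 4 * r ^ n := by
          rw [mul_pow]
          have hrpow : r * r ^ (n - 1) = r ^ n := by
            rw [← pow_succ']
            congr 1; omega
          have h2pow : (2:ℝ) * 2 ^ (n - 1) = 2 ^ n := by
            rw [← pow_succ']
            congr 1; omega
          have h2n2 : (2:ℝ)^(n+2) = 2^n * 4 := by rw [pow_add]; norm_num
          have hmain' : 2 * (δ * r) * ((2:ℝ)^(n-1) * r^(n-1)) = δ * (2 * 2^(n-1)) * (r * r^(n-1)) := by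
            ring
          rw [hmain', hrpow, h2pow, hδdef, h2n2]
          field_simp
        rw [hr', ENNReal.ofReal_mul (by positivity), ENNReal.ofReal_div_of_pos (by norm_num),
          ENNReal.ofReal_toReal hCtop]
        norm_num
      calc volume (S ∩ closedBall x r) ≤ volume T := h2 ▸ h1
      _ ≤ _ := h3
      _ = _ := h4 ▸ (h5.trans h6)
    have hvolB : volume (closedBall x r) = ENNReal.ofReal (r ^ n) * C := by
      rw [Measure.addHaar_closedBall volume x hr.le, finrank_euclideanSpace_fin]
    rw [hvolB]
    calc volume (S ∩ closedBall x r) / (ENNReal.ofReal (r ^ n) * C)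
        ≤ (C / 4 * ENNReal.ofReal (r ^ n)) / (ENNReal.ofReal (r ^ n) * C) :=
          ENNReal.div_le_div_right hvolT _
    _ = (ENNReal.ofReal (r ^ n) * (C / 4)) / (ENNReal.ofReal (r ^ n) * C) := by rw [mul_comm]
    _ = (C / 4) / C := ENNReal.mul_div_mul_left _ _
        (by simp [ENNReal.ofReal_eq_zero, not_le, pow_pos hr]) ENNReal.ofReal_ne_top
    _ = 4⁻¹ := by
        rw [div_eq_mul_inv, div_eq_mul_inv, mul_comm C 4⁻¹, mul_assoc,
          ENNReal.mul_inv_cancel hC0 hCtop, mul_one]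
  -- conclusion
  have hev1 : ∀ᶠ r in 𝓝[>] (0:ℝ), (2⁻¹ : ℝ≥0∞) <
      volume (S ∩ closedBall x r) / volume (closedBall x r) :=
    htend.eventually_mem (Ioi_mem_nhds (by norm_num))
  have hev2 : ∀ᶠ r in 𝓝[>] (0:ℝ), r ∈ Ioc (0:ℝ) (r₀ / 2) :=
    Ioc_mem_nhdsGT_of_mem ⟨le_refl 0, by linarith⟩
  obtain ⟨r, h1, h2⟩ := (hev1.and hev2).exists
  have := hmain r h2
  have hlt : (4⁻¹ : ℝ≥0∞) < 2⁻¹ := by norm_num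
  exact absurd (lt_of_lt_of_le h1 this) (by norm_num)

lemma lag_le {n N : ℕ} {X : Set (Euc n)} {c : Euc n → Fin N → ℝ} {ψ : Fin N → ℝ} {i : Fin N}
    {x : Euc n} (h : x ∈ Lag X c ψ i) (k : Fin N) : -(c x k) - ψ k ≤ -(c x i) - ψ i := by
  have h2 : -(c x i) - ψ i = cStar c ψ x := h.2
  rw [h2]
  show -(c x k) - ψ k ≤ ⨆ j, (-(c x j) - ψ j)
  exact le_ciSup (f := fun j => -(c x j) - ψ j)
    (Set.Finite.bddAbove (Set.finite_range _)) k

lemma lag_measurable {n N : ℕ} (hN : 0 < N) {X : Set (Euc n)} (hX : MeasurableSet X)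
    {c : Euc n → Fin N → ℝ} (hreg : Reg c) (ψ : Fin N → ℝ) (i : Fin N) :
    MeasurableSet (Lag X c ψ i) := by
  haveI : Nonempty (Fin N) := Fin.pos_iff_nonempty.mp hN
  have heq : Lag X c ψ i = X ∩ ⋂ k, {x | -(c x k) - ψ k ≤ -(c x i) - ψ i} := by
    ext x
    simp only [Lag, cStar, Set.mem_setOf_eq, Set.mem_inter_iff, Set.mem_iInter]
    constructor
    · rintro ⟨hx, hx2⟩
      exact ⟨hx, fun k => hx2 ▸ le_ciSup (f := fun j => -(c x j) - ψ j)
        (Set.Finite.bddAbove (Set.finite_range _)) k⟩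
    · rintro ⟨hx, hk⟩
      exact ⟨hx, le_antisymm (le_ciSup (f := fun j => -(c x j) - ψ j)
        (Set.Finite.bddAbove (Set.finite_range _)) i) (ciSup_le hk)⟩
  rw [heq]
  exact hX.inter (MeasurableSet.iInter fun k =>
    measurableSet_le (((hreg k).continuous.neg.sub continuous_const).measurable)
      (((hreg i).continuous.neg.sub continuous_const).measurable))


/-- **Lemma 2.1: the exchange digraph is acyclic.** -/
theorem stmt5 {n N : ℕ} (hn : 2 ≤ n) (hN : 0 < N)
    (X : Set (Euc n)) (hXcpt : IsCompact X)
    (c : Euc n → Fin N → ℝ) (hreg : Reg c) (htwist : Twist X c)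
    (μ : Measure (Euc n)) [IsProbabilityMeasure μ]
    (hac : μ ≪ volume) (hsupp : μ Xᶜ = 0)
    (ψ₁ ψ₂ : Fin N → ℝ) :
    ∀ (l : ℕ) (idx : Fin (l + 2) → Fin N), Function.Injective idx →
      ¬ ∀ j : Fin (l + 2), 0 < μ (Lag X c ψ₁ (idx j) ∩ Lag X c ψ₂ (idx (j + 1))) := by
  intro l idx hinj hcyc
  classical
  haveI : Nonempty (Fin N) := Fin.pos_iff_nonempty.mp hN
  set δψ : Fin N → ℝ := fun k => ψ₁ k - ψ₂ k with hδψ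
  have key : ∀ j : Fin (l+2), ∀ x, x ∈ Lag X c ψ₁ (idx j) ∩ Lag X c ψ₂ (idx (j+1)) →
      ψ₁ (idx j) - ψ₁ (idx (j+1)) ≤ c x (idx (j+1)) - c x (idx j) ∧
      c x (idx (j+1)) - c x (idx j) ≤ ψ₂ (idx j) - ψ₂ (idx (j+1)) := by
    rintro j x ⟨h1, h2⟩
    have ha := lag_le h1 (idx (j+1))
    have hb := lag_le h2 (idx j)
    constructor <;> linarith
  have mono : ∀ j : Fin (l+2), δψ (idx j) ≤ δψ (idx (j+1)) := by
    intro j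
    obtain ⟨x, hx⟩ := nonempty_of_measure_ne_zero (hcyc j).ne'
    have hk := key j x hx
    simp only [hδψ]
    linarith [hk.1, hk.2]
  open Fin.NatCast in
  have chain : ∀ (m : ℕ) (j : Fin (l+2)), δψ (idx j) ≤ δψ (idx (j + (m : Fin (l+2)))) := by
    intro m
    induction m with
    | zero => intro j; simp
    | succ k ih =>
      intro j
      have h1 := ih j
      have h2 := mono (j + (k : Fin (l+2)))
      have hcast : ((k+1 : ℕ) : Fin (l+2)) = (k : Fin (l+2)) + 1 := by push_cast; ring
      rw [hcast, ← add_assoc]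
      exact le_trans h1 h2
  open Fin.NatCast in
  have heq01 : δψ (idx 0) = δψ (idx 1) := by
    have h := chain (l+1) 1
    have hzero : (1 : Fin (l+2)) + ((l+1 : ℕ) : Fin (l+2)) = 0 := by
      have hself : ((l+2 : ℕ) : Fin (l+2)) = 0 := Fin.natCast_self _
      calc (1 : Fin (l+2)) + ((l+1:ℕ) : Fin (l+2))
          = ((1:ℕ):Fin (l+2)) + ((l+1:ℕ):Fin (l+2)) := by norm_num
      _ = ((l+2 : ℕ) : Fin (l+2)) := by rw [← Nat.cast_add]; congr 1; omega
      _ = 0 := hself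
    rw [hzero] at h
    have hm := mono 0
    rw [zero_add] at hm
    exact le_antisymm hm h
  set i : Fin N := idx 0 with hidef
  set i' : Fin N := idx 1 with hi'def
  have hne : i' ≠ i := by
    intro h
    have := hinj h
    simp [Fin.ext_iff] at this
  set S : Set (Euc n) := Lag X c ψ₁ i ∩ Lag X c ψ₂ i' with hSdef
  have hS0 : μ S ≠ 0 := by
    have := hcyc 0
    rw [zero_add] at this
    exact this.ne'
  have hconst' : ∀ y ∈ S, c y i' - c y i = ψ₂ i - ψ₂ i' := by
    intro y hy
    have hk := key 0 y (by rwa [zero_add])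
    rw [zero_add] at hk
    have : ψ₁ i - ψ₁ i' = ψ₂ i - ψ₂ i' := by
      have := heq01
      simp only [hδψ] at this
      linarith
    linarith [hk.1, hk.2]
  have hXmeas : MeasurableSet X := hXcpt.isClosed.measurableSet
  have hSmeas : MeasurableSet S :=
    (lag_measurable hN hXmeas hreg ψ₁ i).inter (lag_measurable hN hXmeas hreg ψ₂ i')
  have hvol : volume S ≠ 0 := fun h => hS0 (hac h)
  haveI : (ae (volume.restrict S)).NeBot := ae_neBot.mpr (by
    rw [Ne, Measure.restrict_eq_zero]; exact hvol)
  have hdens := Besicovitch.ae_tendsto_measure_inter_div volume S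
  have hmem : ∀ᵐ y ∂(volume.restrict S), y ∈ S := ae_restrict_mem hSmeas
  obtain ⟨x, hxd, hxS⟩ := (hdens.and hmem).exists
  have hxX : x ∈ X := hxS.1.1
  have hdiffk : ∀ (k : Fin N) (y : Euc n),
      HasGradientAt (fun z => c z k) (gradient (fun z => c z k) y) y := fun k y =>
    (((hreg k).differentiable (by norm_num)) y).hasGradientAt
  have hgrad : HasGradientAt (fun z => c z i' - c z i)
      (gradient (fun z => c z i') x - gradient (fun z => c z i) x) x := by
    have h1 := hasGradientAt_iff_hasFDerivAt.mp (hdiffk i' x)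
    have h2 := hasGradientAt_iff_hasFDerivAt.mp (hdiffk i x)
    have h3 := h1.sub h2
    rw [hasGradientAt_iff_hasFDerivAt]
    rw [map_sub]
    exact h3
  have hgne : gradient (fun z => c z i') x - gradient (fun z => c z i) x ≠ 0 :=
    sub_ne_zero.mpr (htwist x hxX i' i hne)
  exact not_density_point (by omega) hgrad hgne hxS
    (fun y hy => by rw [hconst' y hy, hconst' x hxS]) hxd
end
end
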